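/- arXiv:quant-ph/0305035 — 3 statements merged into one kernel-verified Lean document; each statement's English description precedes it below -/
import Mathlib

section
/- Let V : ℂ^{d_in} → ℂ^{dA}⊗ℂ^{dB} be an isometry (V†V = I), and let N be the quantum channel N(μ) = Tr_B(V μ V†) (with Kraus operators A_b = (I⊗⟨b|)V). Then for every density matrix ρ on ℂ^{d_in}, the constrained Holevo capacity satisfies χ_N(ρ) = H(N(ρ)) − E_F(V ρ V†), where V ρ V† is regarded as a bipartite density matrix on ℂ^{dA}⊗ℂ^{dB}. -/
open scoped Kronecker Matrix ComplexOrder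

noncomputable section

/-- The von Neumann entropy `H(ρ) = -∑ᵢ λᵢ log λᵢ` of a Hermitian matrix,
where the `λᵢ` are its eigenvalues (with the convention `0 log 0 = 0`,
which holds automatically since `Real.log 0 = 0`). -/
def vNEntropy {n : Type} [Fintype n] [DecidableEq n] (ρ : Matrix n n ℂ) : ℝ :=
  if h : ρ.IsHermitian then -∑ i, h.eigenvalues i * Real.log (h.eigenvalues i) else 0

/-- A density matrix: positive semidefinite with trace 1. -/
def IsDensityMatrix {n : Type} [Fintype n] [DecidableEq n] (ρ : Matrix n n ℂ) : Prop :=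
  ρ.PosSemidef ∧ ρ.trace = 1

/-- The rank-one matrix `|v⟩⟨v|`. -/
def outer {n : Type} [Fintype n] (v : n → ℂ) : Matrix n n ℂ :=
  Matrix.vecMulVec v (star v)

/-- A unit vector. -/
def IsUnitVec {n : Type} [Fintype n] (v : n → ℂ) : Prop :=
  ∑ a, ‖v a‖ ^ 2 = 1

/-- A quantum channel, given by a finite family of Kraus operators `A k`
satisfying the completeness relation `∑ k, (A k)ᴴ * A k = 1`. -/
structure QChannel (I O : Type) [Fintype I] [DecidableEq I] [Fintype O] [DecidableEq O] :
    Type 1 where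
  ι : Type
  [instFintype : Fintype ι]
  A : ι → Matrix O I ℂ
  complete : ∑ k, (A k)ᴴ * A k = 1

attribute [instance] QChannel.instFintype

/-- The action `N(ρ) = ∑ₖ Aₖ ρ Aₖᴴ` of a channel on a matrix. -/
def QChannel.app {I O : Type} [Fintype I] [DecidableEq I] [Fintype O] [DecidableEq O]
    (N : QChannel I O) (ρ : Matrix I I ℂ) : Matrix O O ℂ :=
  ∑ k, N.A k * ρ * (N.A k)ᴴ

theorem kronecker_conjT {l m n p : Type} (A : Matrix l m ℂ) (B : Matrix n p ℂ) :
    (A ⊗ₖ B)ᴴ = Aᴴ ⊗ₖ Bᴴ := by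
  ext ⟨i, j⟩ ⟨k, s⟩
  simp [Matrix.conjTranspose_apply, mul_comm]

theorem sum_kronecker_sum {ι₁ ι₂ l m n p : Type} [Fintype ι₁] [Fintype ι₂]
    (A : ι₁ → Matrix l m ℂ) (B : ι₂ → Matrix n p ℂ) :
    (∑ i, A i) ⊗ₖ (∑ j, B j) = ∑ k : ι₁ × ι₂, A k.1 ⊗ₖ B k.2 := by
  ext ⟨x, y⟩ ⟨x', y'⟩
  simp only [Matrix.sum_apply, Matrix.kroneckerMap_apply, Finset.sum_mul_sum]
  exact (Fintype.sum_prod_type (fun k : ι₁ × ι₂ => A k.1 x x' * B k.2 y y')).symm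

/-- The tensor-product channel `N₁ ⊗ N₂`: its Kraus operators are the Kronecker
products of the Kraus operators of the two factors. -/
def QChannel.prod {I₁ O₁ I₂ O₂ : Type}
    [Fintype I₁] [DecidableEq I₁] [Fintype O₁] [DecidableEq O₁]
    [Fintype I₂] [DecidableEq I₂] [Fintype O₂] [DecidableEq O₂]
    (N₁ : QChannel I₁ O₁) (N₂ : QChannel I₂ O₂) : QChannel (I₁ × I₂) (O₁ × O₂) where
  ι := N₁.ι × N₂.ι
  A := fun k => N₁.A k.1 ⊗ₖ N₂.A k.2
  complete := by
    have h1 : ∀ k : N₁.ι × N₂.ι, (N₁.A k.1 ⊗ₖ N₂.A k.2)ᴴ * (N₁.A k.1 ⊗ₖ N₂.A k.2)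
        = ((N₁.A k.1)ᴴ * N₁.A k.1) ⊗ₖ ((N₂.A k.2)ᴴ * N₂.A k.2) := fun k => by
      rw [kronecker_conjT, Matrix.mul_kronecker_mul]
    rw [Finset.sum_congr rfl fun k _ => h1 k,
      ← sum_kronecker_sum (fun k₁ => (N₁.A k₁)ᴴ * N₁.A k₁) (fun k₂ => (N₂.A k₂)ᴴ * N₂.A k₂),
      N₁.complete, N₂.complete, Matrix.one_kronecker_one]

/-- The minimum output entropy of a channel: the minimum of `H(N(|v⟩⟨v|))`
over unit vectors `v` in the input space. -/
def minOutEntropy {I O : Type} [Fintype I] [DecidableEq I] [Fintype O] [DecidableEq O]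
    (N : QChannel I O) : ℝ :=
  sInf { x | ∃ v : I → ℂ, IsUnitVec v ∧ x = vNEntropy (N.app (outer v)) }

/-- The Holevo capacity `χ_N` of a channel. -/
def holevoCap {I O : Type} [Fintype I] [DecidableEq I] [Fintype O] [DecidableEq O]
    (N : QChannel I O) : ℝ :=
  sSup { x | ∃ (n : ℕ) (p : Fin n → ℝ) (v : Fin n → I → ℂ),
    (∀ i, 0 ≤ p i) ∧ (∑ i, p i = 1) ∧ (∀ i, IsUnitVec (v i)) ∧
    x = vNEntropy (N.app (∑ i, (p i : ℂ) • outer (v i))) -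
      ∑ i, p i * vNEntropy (N.app (outer (v i))) }

/-- The constrained Holevo capacity `χ_N(ρ)`: only ensembles averaging to `ρ` are allowed. -/
def cHolevoCap {I O : Type} [Fintype I] [DecidableEq I] [Fintype O] [DecidableEq O]
    (N : QChannel I O) (ρ : Matrix I I ℂ) : ℝ :=
  sSup { x | ∃ (n : ℕ) (p : Fin n → ℝ) (v : Fin n → I → ℂ),
    (∀ i, 0 ≤ p i) ∧ (∑ i, p i = 1) ∧ (∀ i, IsUnitVec (v i)) ∧
    (∑ i, (p i : ℂ) • outer (v i)) = ρ ∧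
    x = vNEntropy (N.app ρ) - ∑ i, p i * vNEntropy (N.app (outer (v i))) }

/-- Partial trace over the second (B) factor of a bipartite matrix. -/
def traceB {A B : Type} [Fintype B] (σ : Matrix (A × B) (A × B) ℂ) : Matrix A A ℂ :=
  Matrix.of fun a a' => ∑ b, σ (a, b) (a', b)

/-- The entanglement of formation of a bipartite state on `A ⊗ B`. -/
def entF {A B : Type} [Fintype A] [DecidableEq A] [Fintype B] [DecidableEq B]
    (σ : Matrix (A × B) (A × B) ℂ) : ℝ :=
  sInf { x | ∃ (n : ℕ) (p : Fin n → ℝ) (v : Fin n → A × B → ℂ),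
    (∀ i, 0 ≤ p i) ∧ (∀ i, IsUnitVec (v i)) ∧
    (∑ i, (p i : ℂ) • outer (v i)) = σ ∧
    x = ∑ i, p i * vNEntropy (traceB (outer (v i))) }

/-- The tensor product of two bipartite states `σ₁` on `A₁ ⊗ B₁` and `σ₂` on `A₂ ⊗ B₂`
(Kronecker product), reindexed as a bipartite state with A-part `A₁ ⊗ A₂` and
B-part `B₁ ⊗ B₂`. -/
def pairTensor {A₁ B₁ A₂ B₂ : Type}
    (σ₁ : Matrix (A₁ × B₁) (A₁ × B₁) ℂ) (σ₂ : Matrix (A₂ × B₂) (A₂ × B₂) ℂ) :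
    Matrix ((A₁ × A₂) × (B₁ × B₂)) ((A₁ × A₂) × (B₁ × B₂)) ℂ :=
  Matrix.of fun x y =>
    σ₁ (x.1.1, x.2.1) (y.1.1, y.2.1) * σ₂ (x.1.2, x.2.2) (y.1.2, y.2.2)

/-- Trace out the second subsystem (`A₂` and `B₂`) of a quadripartite state. -/
def trace2 {A₁ A₂ B₁ B₂ : Type} [Fintype A₂] [Fintype B₂]
    (σ : Matrix ((A₁ × A₂) × (B₁ × B₂)) ((A₁ × A₂) × (B₁ × B₂)) ℂ) :
    Matrix (A₁ × B₁) (A₁ × B₁) ℂ :=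
  Matrix.of fun x y => ∑ a₂, ∑ b₂, σ ((x.1, a₂), (x.2, b₂)) ((y.1, a₂), (y.2, b₂))

/-- Trace out the first subsystem (`A₁` and `B₁`) of a quadripartite state. -/
def trace1 {A₁ A₂ B₁ B₂ : Type} [Fintype A₁] [Fintype B₁]
    (σ : Matrix ((A₁ × A₂) × (B₁ × B₂)) ((A₁ × A₂) × (B₁ × B₂)) ℂ) :
    Matrix (A₂ × B₂) (A₂ × B₂) ℂ :=
  Matrix.of fun x y => ∑ a₁, ∑ b₁, σ ((a₁, x.1), (b₁, x.2)) ((a₁, y.1), (b₁, y.2))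


section MSWHelpers

theorem msw_outer_conj {m n : Type} [Fintype m] [Fintype n] (M : Matrix m n ℂ) (v : n → ℂ) :
    M * outer v * Mᴴ = outer (M.mulVec v) := by
  ext i j
  simp only [outer, Matrix.mul_apply, Matrix.vecMulVec_apply, Matrix.conjTranspose_apply,
    Pi.star_apply, Matrix.mulVec, dotProduct, star_sum, star_mul', Finset.sum_mul,
    Finset.mul_sum]
  exact Finset.sum_congr rfl fun a _ => Finset.sum_congr rfl fun b _ => by ring

theorem msw_conj_mul (z : ℂ) : star z * z = ((‖z‖ ^ 2 : ℝ) : ℂ) := by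
  simpa using RCLike.conj_mul z

theorem msw_star_dot {n : Type} [Fintype n] (v : n → ℂ) :
    dotProduct (star v) v = ((∑ a, ‖v a‖ ^ 2 : ℝ) : ℂ) := by
  push_cast
  simp only [dotProduct, Pi.star_apply]
  exact Finset.sum_congr rfl fun a _ => by rw [msw_conj_mul]; push_cast; ring

theorem msw_unit_dot {n : Type} [Fintype n] {v : n → ℂ} (h : IsUnitVec v) :
    dotProduct (star v) v = 1 := by
  rw [msw_star_dot, h]; norm_num

theorem msw_unit_of_dot {n : Type} [Fintype n] {v : n → ℂ}
    (h : dotProduct (star v) v = 1) : IsUnitVec v := by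
  rw [msw_star_dot] at h
  exact_mod_cast h

theorem msw_dot_mulVec {m n : Type} [Fintype m] [Fintype n] (M : Matrix m n ℂ) (v : n → ℂ) :
    dotProduct (star (M.mulVec v)) (M.mulVec v)
      = dotProduct (star v) ((Mᴴ * M).mulVec v) := by
  rw [Matrix.star_mulVec, ← Matrix.mulVec_mulVec, Matrix.dotProduct_mulVec,
    Matrix.dotProduct_mulVec, Matrix.dotProduct_mulVec]

theorem msw_outer_posSemidef {n : Type} [Fintype n] [DecidableEq n] (v : n → ℂ) :
    (outer v).PosSemidef := by
  refine Matrix.PosSemidef.of_dotProduct_mulVec_nonneg ?_ ?_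
  · ext i j; simp [outer, Matrix.conjTranspose_apply, Matrix.vecMulVec_apply, mul_comm]
  · intro x
    have h : dotProduct (star x) ((outer v).mulVec x)
        = (∑ a, star (x a) * v a) * star (∑ a, star (x a) * v a) := by
      simp only [outer, Matrix.mulVec, dotProduct, Matrix.vecMulVec_apply,
        Pi.star_apply, star_sum, star_mul', star_star, Finset.mul_sum, Finset.sum_mul]
      rw [Finset.sum_comm]
      exact Finset.sum_congr rfl fun a _ => Finset.sum_congr rfl fun b _ => by ring
    rw [h, mul_comm, msw_conj_mul]
    positivity

theorem msw_traceB_outer {A B : Type} [Fintype A] [Fintype B] (w : A × B → ℂ) :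
    traceB (outer w) = ∑ b, outer (fun a => w (a, b)) := by
  ext a a'
  simp [traceB, outer, Matrix.sum_apply, Matrix.vecMulVec_apply]

theorem msw_sum_posSemidef {n ι : Type} [Fintype n] [DecidableEq n] [Fintype ι]
    (f : ι → Matrix n n ℂ) (h : ∀ i, (f i).PosSemidef) : (∑ i, f i).PosSemidef := by
  classical
  refine Finset.sum_induction f _ (fun a b ha hb => ha.add hb) Matrix.PosSemidef.zero
    (fun i _ => h i)

theorem msw_traceB_outer_posSemidef {A B : Type} [Fintype A] [DecidableEq A] [Fintype B]
    (w : A × B → ℂ) : (traceB (outer w)).PosSemidef := by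
  rw [msw_traceB_outer]
  exact msw_sum_posSemidef _ fun b => msw_outer_posSemidef _

theorem msw_trace_outer {n : Type} [Fintype n] (v : n → ℂ) :
    (outer v).trace = ((∑ a, ‖v a‖ ^ 2 : ℝ) : ℂ) := by
  rw [← msw_star_dot]
  simp [outer, Matrix.trace, Matrix.diag, Matrix.vecMulVec_apply, dotProduct, mul_comm]

theorem msw_traceB_outer_trace {A B : Type} [Fintype A] [Fintype B] {w : A × B → ℂ}
    (hw : IsUnitVec w) : (traceB (outer w)).trace = 1 := by
  have h : (traceB (outer w)).trace = (outer w).trace := by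
    rw [Matrix.trace]
    simp only [traceB, Matrix.diag, Matrix.of_apply, Matrix.trace, outer]
    rw [← Finset.sum_product']
    exact Finset.sum_congr rfl fun x _ => rfl
  rw [h, msw_trace_outer, hw]; norm_num

theorem msw_trace_eq_sum_eigenvalues {n : Type} [Fintype n] [DecidableEq n]
    {ρ : Matrix n n ℂ} (h : ρ.IsHermitian) : ρ.trace = ((∑ i, h.eigenvalues i : ℝ) : ℂ) := by
  conv_lhs => rw [h.spectral_theorem, Unitary.conjStarAlgAut_apply]
  rw [Matrix.trace_mul_cycle]
  rw [show (star (Matrix.IsHermitian.eigenvectorUnitary h : Matrix n n ℂ)) *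
      (Matrix.IsHermitian.eigenvectorUnitary h : Matrix n n ℂ) = 1 from
    Matrix.mem_unitaryGroup_iff'.mp (Matrix.IsHermitian.eigenvectorUnitary h).2, one_mul,
    Matrix.trace_diagonal]
  push_cast
  rfl

theorem msw_vNEntropy_nonneg {n : Type} [Fintype n] [DecidableEq n]
    {ρ : Matrix n n ℂ} (h : ρ.PosSemidef) (ht : ρ.trace = 1) : 0 ≤ vNEntropy ρ := by
  rw [vNEntropy, dif_pos h.1]
  have hsum : ∑ i, h.1.eigenvalues i = 1 := by
    have h2 := msw_trace_eq_sum_eigenvalues h.1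
    rw [ht] at h2
    exact_mod_cast h2.symm
  have hle : ∀ i, h.1.eigenvalues i ≤ 1 := by
    intro i
    calc h.1.eigenvalues i ≤ ∑ j, h.1.eigenvalues j :=
          Finset.single_le_sum (fun j _ => h.eigenvalues_nonneg j) (Finset.mem_univ i)
      _ = 1 := hsum
  have h3 : ∑ i, h.1.eigenvalues i * Real.log (h.1.eigenvalues i) ≤ 0 :=
    Finset.sum_nonpos fun i _ =>
      mul_nonpos_of_nonneg_of_nonpos (h.eigenvalues_nonneg i)
        (Real.log_nonpos (h.eigenvalues_nonneg i) (hle i))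
  linarith

theorem msw_spectral_ensemble {d : ℕ} {ρ : Matrix (Fin d) (Fin d) ℂ}
    (hρ : IsDensityMatrix ρ) :
    ∃ (p : Fin d → ℝ) (v : Fin d → Fin d → ℂ),
      (∀ i, 0 ≤ p i) ∧ (∑ i, p i = 1) ∧ (∀ i, IsUnitVec (v i)) ∧
      (∑ i, (p i : ℂ) • outer (v i)) = ρ := by
  obtain ⟨hpsd, htr⟩ := hρ
  have hherm := hpsd.1
  set U : Matrix (Fin d) (Fin d) ℂ :=
    (Matrix.IsHermitian.eigenvectorUnitary hherm : Matrix (Fin d) (Fin d) ℂ) with hU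
  have hUU : star U * U = 1 :=
    Matrix.mem_unitaryGroup_iff'.mp (Matrix.IsHermitian.eigenvectorUnitary hherm).2
  refine ⟨hherm.eigenvalues, fun i a => U a i, fun i => hpsd.eigenvalues_nonneg i, ?_, ?_, ?_⟩
  · have h2 := msw_trace_eq_sum_eigenvalues hherm
    rw [htr] at h2
    exact_mod_cast h2.symm
  · intro i
    have h1 : (star U * U) i i = 1 := by rw [hUU]; simp
    have h2 : dotProduct (star fun a => U a i) (fun a => U a i) = 1 := by
      rw [← h1]
      simp [Matrix.mul_apply, dotProduct, Matrix.conjTranspose_apply]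
    rw [msw_star_dot] at h2
    exact_mod_cast h2
  · ext a b
    conv_rhs => rw [hherm.spectral_theorem, Unitary.conjStarAlgAut_apply]
    simp only [Matrix.sum_apply, Matrix.smul_apply, outer, Matrix.vecMulVec_apply,
      Pi.star_apply, Matrix.mul_apply, Matrix.diagonal_apply, Function.comp_apply,
      smul_eq_mul, mul_ite, mul_zero, Finset.sum_ite_eq', Finset.mem_univ, if_true,
      Matrix.star_apply, ← hU]
    exact Finset.sum_congr rfl fun i _ => by rw [mul_left_comm, ← mul_assoc]; exact rfl

end MSWHelpers

/-- The Matsumoto–Shimono–Winter correspondence: for the channel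
`N(μ) = Tr_B (V μ Vᴴ)` obtained from an isometry `V`, the constrained Holevo capacity
satisfies `χ_N(ρ) = H(N(ρ)) - E_F(V ρ Vᴴ)`. -/
theorem msw_correspondence {dIn dA dB : ℕ}
    (V : Matrix (Fin dA × Fin dB) (Fin dIn) ℂ) (hV : Vᴴ * V = 1)
    (N : QChannel (Fin dIn) (Fin dA))
    (hN : ∀ μ : Matrix (Fin dIn) (Fin dIn) ℂ, N.app μ = traceB (V * μ * Vᴴ))
    (ρ : Matrix (Fin dIn) (Fin dIn) ℂ) (hρ : IsDensityMatrix ρ) :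
    cHolevoCap N ρ = vNEntropy (N.app ρ) - entF (V * ρ * Vᴴ) := by
  classical
  have hd : dIn ≠ 0 := by
    rintro rfl
    have h0 : ρ.trace = 0 := by simp [Matrix.trace]
    rw [hρ.2] at h0
    exact one_ne_zero (α := ℂ) h0
  have hd' : 0 < dIn := Nat.pos_of_ne_zero hd
  set e : Fin dIn → ℂ := Pi.single ⟨0, hd'⟩ 1 with he
  have heu : IsUnitVec e := by
    apply msw_unit_of_dot
    simp [he, dotProduct, Pi.single_apply, apply_ite, Finset.sum_ite_eq']
  have hNout : ∀ v : Fin dIn → ℂ, N.app (outer v) = traceB (outer (V.mulVec v)) := by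
    intro v; rw [hN, msw_outer_conj]
  unfold cHolevoCap entF
  set H : ℝ := vNEntropy (N.app ρ) with hHdef
  set T : Set ℝ := { x | ∃ (n : ℕ) (p : Fin n → ℝ) (v : Fin n → (Fin dA × Fin dB) → ℂ),
    (∀ i, 0 ≤ p i) ∧ (∀ i, IsUnitVec (v i)) ∧
    (∑ i, (p i : ℂ) • outer (v i)) = V * ρ * Vᴴ ∧
    x = ∑ i, p i * vNEntropy (traceB (outer (v i))) } with hT
  set S : Set ℝ := { x | ∃ (n : ℕ) (p : Fin n → ℝ) (v : Fin n → Fin dIn → ℂ),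
    (∀ i, 0 ≤ p i) ∧ (∑ i, p i = 1) ∧ (∀ i, IsUnitVec (v i)) ∧
    (∑ i, (p i : ℂ) • outer (v i)) = ρ ∧
    x = H - ∑ i, p i * vNEntropy (N.app (outer (v i))) } with hS
  show sSup S = H - sInf T
  have forward : ∀ x ∈ S, ∃ s ∈ T, x = H - s := by
    rintro x ⟨n, p, v, hp, hp1, hu, hsum, rfl⟩
    refine ⟨∑ i, p i * vNEntropy (N.app (outer (v i))),
      ⟨n, p, fun i => V.mulVec (v i), hp, ?_, ?_, ?_⟩, rfl⟩
    · intro i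
      apply msw_unit_of_dot
      rw [msw_dot_mulVec, hV, Matrix.one_mulVec]
      exact msw_unit_dot (hu i)
    · calc ∑ i, (p i : ℂ) • outer (V.mulVec (v i))
          = ∑ i, (p i : ℂ) • (V * outer (v i) * Vᴴ) :=
            Finset.sum_congr rfl fun i _ => by rw [msw_outer_conj]
        _ = V * (∑ i, (p i : ℂ) • outer (v i)) * Vᴴ := by
            rw [Matrix.mul_sum, Matrix.sum_mul]
            exact Finset.sum_congr rfl fun i _ => by
              rw [Matrix.mul_smul, Matrix.smul_mul]
        _ = V * ρ * Vᴴ := by rw [hsum]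
    · exact Finset.sum_congr rfl fun i _ => by rw [hNout]
  have hTge0 : ∀ s ∈ T, 0 ≤ s := by
    rintro s ⟨n, p, w, hp, hu, hsum, rfl⟩
    refine Finset.sum_nonneg fun i _ => mul_nonneg (hp i) ?_
    exact msw_vNEntropy_nonneg (msw_traceB_outer_posSemidef _) (msw_traceB_outer_trace (hu i))
  have reverse : ∀ s ∈ T, H - s ∈ S := by
    rintro s ⟨n, p, w, hp, hu, hsum, rfl⟩
    set P : Matrix (Fin dA × Fin dB) (Fin dA × Fin dB) ℂ := 1 - V * Vᴴ with hPdef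
    have hPV : P * V = 0 := by
      rw [hPdef, Matrix.sub_mul, Matrix.one_mul, Matrix.mul_assoc, hV, Matrix.mul_one, sub_self]
    have hPH : Pᴴ = P := by
      rw [hPdef]
      simp [Matrix.conjTranspose_sub, Matrix.conjTranspose_mul]
    have hzero : ∑ i, (p i : ℂ) • outer (P.mulVec (w i)) = 0 := by
      have h1 : P * (V * ρ * Vᴴ) * P = 0 := by
        rw [show P * (V * ρ * Vᴴ) * P = P * V * (ρ * (Vᴴ * P)) from by simp only [Matrix.mul_assoc], hPV,
          Matrix.zero_mul]
      calc ∑ i, (p i : ℂ) • outer (P.mulVec (w i))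
          = ∑ i, (p i : ℂ) • (P * outer (w i) * Pᴴ) :=
            Finset.sum_congr rfl fun i _ => by rw [msw_outer_conj]
        _ = P * (∑ i, (p i : ℂ) • outer (w i)) * Pᴴ := by
            rw [Matrix.mul_sum, Matrix.sum_mul]
            exact Finset.sum_congr rfl fun i _ => by rw [Matrix.mul_smul, Matrix.smul_mul]
        _ = 0 := by rw [hsum, hPH, h1]
    set c : Fin n → ℝ := fun i => ∑ x, ‖(P.mulVec (w i)) x‖ ^ 2 with hc
    have hctr : ∑ i, p i * c i = 0 := by
      have h4 := congrArg Matrix.trace hzero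
      rw [Matrix.trace_sum, Matrix.trace_zero] at h4
      have h2 : ∑ i, (p i : ℂ) * ((c i : ℝ) : ℂ) = 0 := by
        rw [← h4]
        exact (Finset.sum_congr rfl fun i _ => by
          rw [Matrix.trace_smul, msw_trace_outer]; simp [smul_eq_mul, hc]).symm
      have h3 : ((∑ i, p i * c i : ℝ) : ℂ) = 0 := by push_cast; exact_mod_cast h2
      exact_mod_cast h3
    have hproj : ∀ i, 0 < p i → V.mulVec (Vᴴ.mulVec (w i)) = w i := by
      intro i hi
      have hci : c i = 0 := by
        have hterm : ∀ j ∈ Finset.univ, (0:ℝ) ≤ p j * c j := fun j _ =>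
          mul_nonneg (hp j) (by positivity)
        have h5 := (Finset.sum_eq_zero_iff_of_nonneg hterm).mp hctr i (Finset.mem_univ i)
        rcases mul_eq_zero.mp h5 with h6 | h6
        · exact absurd h6 hi.ne'
        · exact h6
      have hPw : P.mulVec (w i) = 0 := by
        funext x
        have hterm : ∀ y ∈ Finset.univ, (0:ℝ) ≤ ‖(P.mulVec (w i)) y‖ ^ 2 := fun y _ => by
          positivity
        have h5 := (Finset.sum_eq_zero_iff_of_nonneg hterm).mp hci x (Finset.mem_univ x)
        have h6 : ‖(P.mulVec (w i)) x‖ = 0 := by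
          have := pow_eq_zero_iff (n := 2) (by norm_num) |>.mp h5
          exact this
        simpa using norm_eq_zero.mp h6
      have h7 : (V * Vᴴ).mulVec (w i) = w i := by
        rw [hPdef, Matrix.sub_mulVec, Matrix.one_mulVec] at hPw
        have := sub_eq_zero.mp hPw
        exact this.symm
      rw [Matrix.mulVec_mulVec, h7]
    have hp1 : ∑ i, p i = 1 := by
      have h5 : (V * ρ * Vᴴ).trace = 1 := by
        rw [Matrix.trace_mul_cycle, hV, Matrix.one_mul, hρ.2]
      have h6 : ((∑ i, p i : ℝ) : ℂ) = 1 := by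
        rw [← h5, ← hsum, Matrix.trace_sum]
        push_cast
        exact Finset.sum_congr rfl fun i _ => by
          rw [Matrix.trace_smul, msw_trace_outer, hu i, smul_eq_mul]; norm_num
      exact_mod_cast h6
    set v : Fin n → Fin dIn → ℂ := fun i => if 0 < p i then Vᴴ.mulVec (w i) else e with hv
    have hveq : ∀ i, 0 < p i → v i = Vᴴ.mulVec (w i) := fun i hi => by simp [hv, hi]
    refine ⟨n, p, v, hp, hp1, ?_, ?_, ?_⟩
    · intro i
      by_cases hi : 0 < p i
      · rw [hveq i hi]
        apply msw_unit_of_dot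
        rw [msw_dot_mulVec, Matrix.conjTranspose_conjTranspose, ← Matrix.mulVec_mulVec,
          hproj i hi]
        exact msw_unit_dot (hu i)
      · have : v i = e := by simp [hv, hi]
        rw [this]; exact heu
    · have hρ2 : ρ = Vᴴ * (V * ρ * Vᴴ) * V := by
        rw [show Vᴴ * (V * ρ * Vᴴ) * V = Vᴴ * V * ρ * (Vᴴ * V) from by simp only [Matrix.mul_assoc], hV,
          Matrix.one_mul, Matrix.mul_one]
      have step : ∑ i, (p i : ℂ) • outer (v i) = ∑ i, (p i : ℂ) • outer (Vᴴ.mulVec (w i)) := by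
        refine Finset.sum_congr rfl fun i _ => ?_
        by_cases hi : 0 < p i
        · rw [hveq i hi]
        · have hpi : p i = 0 := le_antisymm (not_lt.mp hi) (hp i)
          rw [hpi]; simp
      rw [step]
      calc ∑ i, (p i : ℂ) • outer (Vᴴ.mulVec (w i))
          = ∑ i, (p i : ℂ) • (Vᴴ * outer (w i) * V) := by
            refine Finset.sum_congr rfl fun i _ => ?_
            congr 1
            rw [← msw_outer_conj, Matrix.conjTranspose_conjTranspose]
        _ = Vᴴ * (∑ i, (p i : ℂ) • outer (w i)) * V := by
            rw [Matrix.mul_sum, Matrix.sum_mul]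
            exact Finset.sum_congr rfl fun i _ => by rw [Matrix.mul_smul, Matrix.smul_mul]
        _ = ρ := by rw [hsum, ← hρ2]
    · have step : ∀ i, p i * vNEntropy (N.app (outer (v i)))
          = p i * vNEntropy (traceB (outer (w i))) := by
        intro i
        by_cases hi : 0 < p i
        · rw [hveq i hi, hNout, Matrix.mulVec_mulVec, ← Matrix.mulVec_mulVec, hproj i hi]
        · have hpi : p i = 0 := le_antisymm (not_lt.mp hi) (hp i)
          rw [hpi, zero_mul, zero_mul]
      rw [Finset.sum_congr rfl fun i _ => step i]
  have hSne : S.Nonempty := by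
    obtain ⟨p, v, hp, hp1, hu, hsum⟩ := msw_spectral_ensemble hρ
    exact ⟨_, dIn, p, v, hp, hp1, hu, hsum, rfl⟩
  have hTne : T.Nonempty := by
    obtain ⟨x, hx⟩ := hSne
    obtain ⟨s, hsT, _⟩ := forward x hx
    exact ⟨s, hsT⟩
  have hTbdd : BddBelow T := ⟨0, fun t ht => hTge0 t ht⟩
  have hSbdd : BddAbove S := by
    refine ⟨H, fun x hx => ?_⟩
    obtain ⟨s, hsT, rfl⟩ := forward x hx
    have := hTge0 s hsT
    linarith
  apply le_antisymm
  · refine csSup_le hSne fun x hx => ?_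
    obtain ⟨s, hsT, rfl⟩ := forward x hx
    have h := csInf_le hTbdd hsT
    linarith
  · have h2 : H - sSup S ≤ sInf T :=
      le_csInf hTne fun s hs => by
        have := le_csSup hSbdd (reverse s hs)
        linarith
    linarith


end
end

section
/- For every quantum channel N, the constrained Holevo capacity is concave as a function of the input state: for all density matrices ρ1, ρ2 on the input space of N and all t ∈ [0,1], χ_N(t ρ1 + (1−t) ρ2) ≥ t χ_N(ρ1) + (1−t) χ_N(ρ2). -/
open scoped Kronecker Matrix ComplexOrder

noncomputable section

set_option linter.unusedSectionVars false

namespace ChiConcave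
open Matrix Real

variable {n : Type} [Fintype n] [DecidableEq n]

lemma posSemidef_real_smul {A : Matrix n n ℂ} (hA : A.PosSemidef) {c : ℝ} (hc : 0 ≤ c) :
    ((c : ℂ) • A).PosSemidef := by
  refine Matrix.PosSemidef.of_dotProduct_mulVec_nonneg ?_ fun x => ?_
  · unfold Matrix.IsHermitian
    rw [conjTranspose_smul, hA.1.eq]
    congr 1
    simp [Complex.ext_iff]
  · rw [smul_mulVec, dotProduct_smul, smul_eq_mul]
    exact mul_nonneg (by exact_mod_cast hc) (hA.dotProduct_mulVec_nonneg x)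

lemma outer_posSemidef (v : n → ℂ) : (outer v).PosSemidef := by
  rw [outer, Matrix.vecMulVec_eq Unit, ← Matrix.conjTranspose_replicateCol]
  exact Matrix.posSemidef_self_mul_conjTranspose _

lemma outer_trace {v : n → ℂ} (hv : IsUnitVec v) : (outer v).trace = 1 := by
  have h : (outer v).trace = ((∑ a, ‖v a‖ ^ 2 : ℝ) : ℂ) := by
    rw [Matrix.trace]
    push_cast
    refine Finset.sum_congr rfl fun a _ => ?_
    rw [Matrix.diag_apply, outer, Matrix.vecMulVec_apply, Pi.star_apply, Complex.star_def,
      Complex.mul_conj, Complex.normSq_eq_norm_sq]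
    push_cast
    ring
  rw [h, hv, Complex.ofReal_one]

lemma outer_density {v : n → ℂ} (hv : IsUnitVec v) : IsDensityMatrix (outer v) :=
  ⟨outer_posSemidef v, outer_trace hv⟩

end ChiConcave
namespace ChiConcave
open Matrix Real

variable {I O : Type} [Fintype I] [DecidableEq I] [Fintype O] [DecidableEq O]

lemma app_posSemidef (N : QChannel I O) {ρ : Matrix I I ℂ} (hρ : ρ.PosSemidef) :
    (N.app ρ).PosSemidef := by
  rw [QChannel.app]
  refine Finset.sum_induction _ _ (fun a b ha hb => ha.add hb) Matrix.PosSemidef.zero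
    fun k _ => hρ.mul_mul_conjTranspose_same (N.A k)

lemma app_trace (N : QChannel I O) (ρ : Matrix I I ℂ) : (N.app ρ).trace = ρ.trace := by
  rw [QChannel.app, Matrix.trace_sum]
  have h : ∀ k, (N.A k * ρ * (N.A k)ᴴ).trace = ((N.A k)ᴴ * N.A k * ρ).trace := by
    intro k
    rw [Matrix.trace_mul_cycle]
  rw [Finset.sum_congr rfl fun k _ => h k, ← Matrix.trace_sum]
  rw [← Finset.sum_mul, N.complete, Matrix.one_mul]

lemma app_density (N : QChannel I O) {ρ : Matrix I I ℂ} (hρ : IsDensityMatrix ρ) :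
    IsDensityMatrix (N.app ρ) := ⟨app_posSemidef N hρ.1, by rw [app_trace, hρ.2]⟩

lemma app_add (N : QChannel I O) (ρ σ : Matrix I I ℂ) :
    N.app (ρ + σ) = N.app ρ + N.app σ := by
  rw [QChannel.app, QChannel.app, QChannel.app, ← Finset.sum_add_distrib]
  refine Finset.sum_congr rfl fun k _ => ?_
  rw [Matrix.mul_add, Matrix.add_mul]

lemma app_smul (N : QChannel I O) (c : ℂ) (ρ : Matrix I I ℂ) :
    N.app (c • ρ) = c • N.app ρ := by
  rw [QChannel.app, QChannel.app, Finset.smul_sum]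
  refine Finset.sum_congr rfl fun k _ => ?_
  rw [Matrix.mul_smul, Matrix.smul_mul]

lemma app_sum (N : QChannel I O) {m : ℕ} (f : Fin m → Matrix I I ℂ) :
    N.app (∑ i, f i) = ∑ i, N.app (f i) := by
  induction m with
  | zero => simp [QChannel.app]
  | succ m ih =>
    rw [Fin.sum_univ_castSucc, app_add, ih]
    rw [Fin.sum_univ_castSucc (f := fun i => N.app (f i))]

end ChiConcave
namespace ChiConcave
open Matrix Real

variable {n : Type} [Fintype n] [DecidableEq n]

lemma vNEntropy_eq {ρ : Matrix n n ℂ} (h : ρ.IsHermitian) :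
    vNEntropy ρ = ∑ i, Real.negMulLog (h.eigenvalues i) := by
  rw [vNEntropy, dif_pos h, ← Finset.sum_neg_distrib]
  refine Finset.sum_congr rfl fun i _ => ?_
  rw [Real.negMulLog, neg_mul]

lemma sum_eigenvalues_eq_trace {ρ : Matrix n n ℂ} (h : ρ.IsHermitian) :
    ((∑ i, h.eigenvalues i : ℝ) : ℂ) = ρ.trace := by
  conv_rhs => rw [h.spectral_theorem, Unitary.conjStarAlgAut_apply]
  rw [Matrix.trace_mul_cycle, Matrix.mem_unitaryGroup_iff'.mp h.eigenvectorUnitary.2,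
    Matrix.one_mul, Matrix.trace_diagonal]
  push_cast
  rfl

lemma eigenvalues_sum_one {ρ : Matrix n n ℂ} (h : IsDensityMatrix ρ) :
    ∑ i, h.1.1.eigenvalues i = 1 := by
  have := (sum_eigenvalues_eq_trace h.1.1).trans h.2
  exact_mod_cast this

lemma vNEntropy_nonneg {ρ : Matrix n n ℂ} (h : IsDensityMatrix ρ) : 0 ≤ vNEntropy ρ := by
  rw [vNEntropy_eq h.1.1]
  refine Finset.sum_nonneg fun i _ => Real.negMulLog_nonneg (h.1.eigenvalues_nonneg i) ?_
  calc h.1.1.eigenvalues i ≤ ∑ j, h.1.1.eigenvalues j :=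
        Finset.single_le_sum (fun j _ => h.1.eigenvalues_nonneg j) (Finset.mem_univ i)
    _ = 1 := eigenvalues_sum_one h

lemma jensen_sum {k : Type} [Fintype k] (B : n → k → ℝ) (lam : k → ℝ)
    (hB0 : ∀ i j, 0 ≤ B i j) (hrow : ∀ i, ∑ j, B i j = 1) (hcol : ∀ j, ∑ i, B i j = 1)
    (hlam : ∀ j, 0 ≤ lam j) :
    ∑ j, Real.negMulLog (lam j) ≤ ∑ i, Real.negMulLog (∑ j, B i j * lam j) := by
  have h1 : ∀ i, ∑ j, B i j * Real.negMulLog (lam j) ≤ Real.negMulLog (∑ j, B i j * lam j) := by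
    intro i
    have := Real.concaveOn_negMulLog.le_map_sum (t := Finset.univ) (w := B i) (p := lam)
      (fun j _ => hB0 i j) (hrow i) (fun j _ => hlam j)
    simpa using this
  calc ∑ j, Real.negMulLog (lam j) = ∑ j, (∑ i, B i j) * Real.negMulLog (lam j) := by
        refine Finset.sum_congr rfl fun j _ => ?_
        rw [hcol j, one_mul]
    _ = ∑ i, ∑ j, B i j * Real.negMulLog (lam j) := by
        rw [Finset.sum_comm]
        exact Finset.sum_congr rfl fun j _ => Finset.sum_mul _ _ _
    _ ≤ _ := Finset.sum_le_sum fun i _ => h1 i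

end ChiConcave
namespace ChiConcave
open Matrix Real

variable {n : Type} [Fintype n] [DecidableEq n]

lemma pinching {A : Matrix n n ℂ} (hA : A.PosSemidef) (V : Matrix.unitaryGroup n ℂ) :
    vNEntropy A ≤ ∑ i, Real.negMulLog (((star (V : Matrix n n ℂ) * A * V) i i).re) := by
  obtain ⟨W, hWmem, hWeq⟩ :
      {W : Matrix n n ℂ // W ∈ Matrix.unitaryGroup n ℂ ∧
        W = star (V : Matrix n n ℂ) * (hA.1.eigenvectorUnitary : Matrix n n ℂ)} :=
    ⟨↑(star V * hA.1.eigenvectorUnitary), (star V * hA.1.eigenvectorUnitary).2, rfl⟩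
  have hstarW : star W = star (hA.1.eigenvectorUnitary : Matrix n n ℂ) * (V : Matrix n n ℂ) := by
    rw [hWeq, Matrix.star_mul, star_star]
  have key : star (V : Matrix n n ℂ) * A * (V : Matrix n n ℂ)
      = W * Matrix.diagonal (RCLike.ofReal ∘ hA.1.eigenvalues) * star W := by
    rw [hstarW, hWeq]
    conv_lhs => rw [hA.1.spectral_theorem, Unitary.conjStarAlgAut_apply]
    simp only [Matrix.mul_assoc]
  have diag : ∀ i, (star (V : Matrix n n ℂ) * A * (V : Matrix n n ℂ)) i i
      = ((∑ j, Complex.normSq (W i j) * hA.1.eigenvalues j : ℝ) : ℂ) := by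
    intro i
    rw [key, Matrix.mul_apply]
    push_cast
    refine Finset.sum_congr rfl fun j _ => ?_
    rw [Matrix.mul_diagonal, Matrix.star_apply]
    have h : W i j * (RCLike.ofReal ∘ hA.1.eigenvalues) j * star (W i j)
        = (W i j * star (W i j)) * ((RCLike.ofReal ∘ hA.1.eigenvalues) j : ℂ) :=
      mul_right_comm _ _ _
    rw [h]
    simp only [Complex.star_def]
    rw [Complex.mul_conj]
    simp only [Function.comp_apply, RCLike.ofReal_alg, Complex.real_smul, mul_one]
  have row : ∀ i, ∑ j, Complex.normSq (W i j) = 1 := by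
    intro i
    have h2 := congrFun (congrFun (Matrix.mem_unitaryGroup_iff.mp hWmem) i) i
    rw [Matrix.mul_apply, Matrix.one_apply_eq] at h2
    have h3 : ((∑ j, Complex.normSq (W i j) : ℝ) : ℂ) = 1 := by
      rw [← h2]
      push_cast
      refine Finset.sum_congr rfl fun j _ => ?_
      rw [Matrix.star_apply, Complex.star_def, Complex.mul_conj]
    exact_mod_cast h3
  have col : ∀ j, ∑ i, Complex.normSq (W i j) = 1 := by
    intro j
    have h2 := congrFun (congrFun (Matrix.mem_unitaryGroup_iff'.mp hWmem) j) j
    rw [Matrix.mul_apply, Matrix.one_apply_eq] at h2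
    have h3 : ((∑ i, Complex.normSq (W i j) : ℝ) : ℂ) = 1 := by
      rw [← h2]
      push_cast
      refine Finset.sum_congr rfl fun i _ => ?_
      rw [Matrix.star_apply, Complex.star_def, mul_comm, Complex.mul_conj]
    exact_mod_cast h3
  rw [vNEntropy_eq hA.1]
  have hj := jensen_sum (fun i j => Complex.normSq (W i j)) hA.1.eigenvalues
    (fun i j => Complex.normSq_nonneg _) row col hA.eigenvalues_nonneg
  refine hj.trans (le_of_eq (Finset.sum_congr rfl fun i _ => ?_))
  rw [diag i, Complex.ofReal_re]

end ChiConcave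
namespace ChiConcave
open Matrix Real

variable {n : Type} [Fintype n] [DecidableEq n]

lemma diag_re_nonneg {M : Matrix n n ℂ} (hM : M.PosSemidef) (i : n) : 0 ≤ (M i i).re := by
  have h := hM.re_dotProduct_nonneg (Pi.single i 1)
  simpa [dotProduct, Matrix.mulVec, Pi.single_apply, Finset.sum_ite_eq,
    Finset.mul_sum, mul_ite, ite_mul] using h

lemma vNEntropy_concave {σ₁ σ₂ : Matrix n n ℂ} (h1 : IsDensityMatrix σ₁) (h2 : IsDensityMatrix σ₂)
    {t : ℝ} (ht0 : 0 ≤ t) (ht1 : t ≤ 1) :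
    t * vNEntropy σ₁ + (1 - t) * vNEntropy σ₂ ≤
      vNEntropy ((t : ℂ) • σ₁ + ((1 - t : ℝ) : ℂ) • σ₂) := by
  have ht1' : (0 : ℝ) ≤ 1 - t := by linarith
  set σ : Matrix n n ℂ := (t : ℂ) • σ₁ + ((1 - t : ℝ) : ℂ) • σ₂ with hσdef
  have hσ : σ.PosSemidef := (posSemidef_real_smul h1.1 ht0).add (posSemidef_real_smul h2.1 ht1')
  set V : Matrix.unitaryGroup n ℂ := hσ.1.eigenvectorUnitary with hV
  have hdiagσ := hσ.1.conjStarAlgAut_star_eigenvectorUnitary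
  simp only [Unitary.conjStarAlgAut_star_apply, Unitary.coe_star] at hdiagσ
  have e1 : star (V : Matrix n n ℂ) * σ * (V : Matrix n n ℂ)
      = (t : ℂ) • (star (V : Matrix n n ℂ) * σ₁ * (V : Matrix n n ℂ))
        + ((1 - t : ℝ) : ℂ) • (star (V : Matrix n n ℂ) * σ₂ * (V : Matrix n n ℂ)) := by
    rw [hσdef, Matrix.mul_add, Matrix.add_mul, Matrix.mul_smul, Matrix.smul_mul,
      Matrix.mul_smul, Matrix.smul_mul]
  have hsplit : ∀ i, hσ.1.eigenvalues i
      = t * ((star (V : Matrix n n ℂ) * σ₁ * (V : Matrix n n ℂ)) i i).re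
        + (1 - t) * ((star (V : Matrix n n ℂ) * σ₂ * (V : Matrix n n ℂ)) i i).re := by
    intro i
    have h3 := congrFun (congrFun (hdiagσ.symm.trans e1) i) i
    rw [Matrix.diagonal_apply_eq] at h3
    have h4 := congrArg Complex.re h3
    simpa [Complex.add_re, Complex.mul_re, Complex.ofReal_re, Complex.ofReal_im,
      Complex.real_smul] using h4
  have hd : ∀ (τ : Matrix n n ℂ), τ.PosSemidef →
      ∀ i, 0 ≤ ((star (V : Matrix n n ℂ) * τ * (V : Matrix n n ℂ)) i i).re := by
    intro τ hτ i
    have h5 := hτ.conjTranspose_mul_mul_same (V : Matrix n n ℂ)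
    rw [← Matrix.star_eq_conjTranspose] at h5
    exact diag_re_nonneg h5 i
  rw [vNEntropy_eq hσ.1]
  calc t * vNEntropy σ₁ + (1 - t) * vNEntropy σ₂
      ≤ t * ∑ i, Real.negMulLog (((star (V : Matrix n n ℂ) * σ₁ * (V : Matrix n n ℂ)) i i).re)
        + (1 - t) * ∑ i, Real.negMulLog
            (((star (V : Matrix n n ℂ) * σ₂ * (V : Matrix n n ℂ)) i i).re) :=
        add_le_add (mul_le_mul_of_nonneg_left (pinching h1.1 V) ht0)
          (mul_le_mul_of_nonneg_left (pinching h2.1 V) ht1')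
    _ = ∑ i, (t * Real.negMulLog (((star (V : Matrix n n ℂ) * σ₁ * (V : Matrix n n ℂ)) i i).re)
        + (1 - t) * Real.negMulLog
            (((star (V : Matrix n n ℂ) * σ₂ * (V : Matrix n n ℂ)) i i).re)) := by
        rw [Finset.mul_sum, Finset.mul_sum, ← Finset.sum_add_distrib]
    _ ≤ ∑ i, Real.negMulLog (hσ.1.eigenvalues i) := by
        refine Finset.sum_le_sum fun i _ => ?_
        rw [hsplit i]
        have hc := Real.concaveOn_negMulLog.2 (Set.mem_Ici.mpr (hd σ₁ h1.1 i))
          (Set.mem_Ici.mpr (hd σ₂ h2.1 i)) ht0 ht1' (by ring)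
        simpa [smul_eq_mul] using hc

end ChiConcave
namespace ChiConcave
open Matrix Real

lemma spectral_ensemble {d : ℕ} {ρ : Matrix (Fin d) (Fin d) ℂ} (hρ : IsDensityMatrix ρ) :
    ∃ (p : Fin d → ℝ) (v : Fin d → Fin d → ℂ), (∀ i, 0 ≤ p i) ∧ (∑ i, p i = 1) ∧
      (∀ i, IsUnitVec (v i)) ∧ (∑ i, (p i : ℂ) • outer (v i)) = ρ := by
  refine ⟨hρ.1.1.eigenvalues, fun i a => (hρ.1.1.eigenvectorUnitary : Matrix (Fin d) (Fin d) ℂ) a i,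
    hρ.1.eigenvalues_nonneg, eigenvalues_sum_one hρ, fun i => ?_, ?_⟩
  · have h2 := congrFun (congrFun (Matrix.mem_unitaryGroup_iff'.mp hρ.1.1.eigenvectorUnitary.2) i) i
    rw [Matrix.mul_apply, Matrix.one_apply_eq] at h2
    have h3 : ((∑ a, ‖(hρ.1.1.eigenvectorUnitary : Matrix (Fin d) (Fin d) ℂ) a i‖ ^ 2 : ℝ) : ℂ)
        = 1 := by
      refine Eq.trans ?_ h2
      push_cast
      refine Finset.sum_congr rfl fun a _ => ?_
      rw [Matrix.star_apply]
      simp only [Complex.star_def]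
      rw [mul_comm, Complex.mul_conj,
        Complex.normSq_eq_norm_sq]
      push_cast; ring
    rw [IsUnitVec]
    exact_mod_cast h3
  · ext a b
    conv_rhs => rw [hρ.1.1.spectral_theorem, Unitary.conjStarAlgAut_apply]
    rw [Matrix.sum_apply, Matrix.mul_apply]
    refine Finset.sum_congr rfl fun i _ => ?_
    rw [Matrix.smul_apply, outer, Matrix.vecMulVec_apply, Matrix.mul_diagonal,
      Matrix.star_apply, smul_eq_mul]
    simp only [Function.comp_apply, RCLike.ofReal_alg, Complex.real_smul, mul_one,
      Pi.star_apply]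
    ring

end ChiConcave
namespace ChiConcave
open Matrix Real

variable {dI dO : ℕ}

lemma chiSet_bddAbove (N : QChannel (Fin dI) (Fin dO)) (ρ : Matrix (Fin dI) (Fin dI) ℂ) :
    BddAbove {x | ∃ (n : ℕ) (p : Fin n → ℝ) (v : Fin n → Fin dI → ℂ),
      (∀ i, 0 ≤ p i) ∧ (∑ i, p i = 1) ∧ (∀ i, IsUnitVec (v i)) ∧
      (∑ i, (p i : ℂ) • outer (v i)) = ρ ∧
      x = vNEntropy (N.app ρ) - ∑ i, p i * vNEntropy (N.app (outer (v i)))} := by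
  refine ⟨vNEntropy (N.app ρ), fun x hx => ?_⟩
  obtain ⟨n, p, v, hp0, hps, hv, hc, rfl⟩ := hx
  have h : 0 ≤ ∑ i, p i * vNEntropy (N.app (outer (v i))) :=
    Finset.sum_nonneg fun i _ =>
      mul_nonneg (hp0 i) (vNEntropy_nonneg (app_density N (outer_density (hv i))))
  linarith

lemma mem_le_cHolevoCap (N : QChannel (Fin dI) (Fin dO)) (ρ : Matrix (Fin dI) (Fin dI) ℂ)
    {n : ℕ} {p : Fin n → ℝ} {v : Fin n → Fin dI → ℂ}
    (hp0 : ∀ i, 0 ≤ p i) (hps : ∑ i, p i = 1) (hv : ∀ i, IsUnitVec (v i))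
    (hc : (∑ i, (p i : ℂ) • outer (v i)) = ρ) :
    vNEntropy (N.app ρ) - ∑ i, p i * vNEntropy (N.app (outer (v i))) ≤ cHolevoCap N ρ :=
  le_csSup (chiSet_bddAbove N ρ) ⟨n, p, v, hp0, hps, hv, hc, rfl⟩

lemma cHolevoCap_exists_near (N : QChannel (Fin dI) (Fin dO)) {ρ : Matrix (Fin dI) (Fin dI) ℂ}
    (hρ : IsDensityMatrix ρ) {y : ℝ} (hy : y < cHolevoCap N ρ) :
    ∃ (n : ℕ) (p : Fin n → ℝ) (v : Fin n → Fin dI → ℂ),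
      (∀ i, 0 ≤ p i) ∧ (∑ i, p i = 1) ∧ (∀ i, IsUnitVec (v i)) ∧
      (∑ i, (p i : ℂ) • outer (v i)) = ρ ∧
      y < vNEntropy (N.app ρ) - ∑ i, p i * vNEntropy (N.app (outer (v i))) := by
  obtain ⟨pp, vv, h0, hs, hu, hd⟩ := spectral_ensemble hρ
  have hne : ∃ x, x ∈ {x | ∃ (n : ℕ) (p : Fin n → ℝ) (v : Fin n → Fin dI → ℂ),
      (∀ i, 0 ≤ p i) ∧ (∑ i, p i = 1) ∧ (∀ i, IsUnitVec (v i)) ∧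
      (∑ i, (p i : ℂ) • outer (v i)) = ρ ∧
      x = vNEntropy (N.app ρ) - ∑ i, p i * vNEntropy (N.app (outer (v i)))} :=
    ⟨_, ⟨dI, pp, vv, h0, hs, hu, hd, rfl⟩⟩
  obtain ⟨x, hxmem, hyx⟩ := exists_lt_of_lt_csSup hne hy
  obtain ⟨n, p, v, h0', hs', hu', hc', rfl⟩ := hxmem
  exact ⟨n, p, v, h0', hs', hu', hc', hyx⟩

end ChiConcave

/-- The constrained Holevo capacity `χ_N(ρ)` is concave in the input state `ρ`. -/
theorem cHolevoCap_concave {dI dO : ℕ} (N : QChannel (Fin dI) (Fin dO))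
    (ρ₁ ρ₂ : Matrix (Fin dI) (Fin dI) ℂ)
    (hρ₁ : IsDensityMatrix ρ₁) (hρ₂ : IsDensityMatrix ρ₂)
    (t : ℝ) (ht₀ : 0 ≤ t) (ht₁ : t ≤ 1) :
    cHolevoCap N ((t : ℂ) • ρ₁ + ((1 - t : ℝ) : ℂ) • ρ₂) ≥
      t * cHolevoCap N ρ₁ + (1 - t) * cHolevoCap N ρ₂ := by
  classical
  have ht1' : (0 : ℝ) ≤ 1 - t := by linarith
  set ρ : Matrix (Fin dI) (Fin dI) ℂ := (t : ℂ) • ρ₁ + ((1 - t : ℝ) : ℂ) • ρ₂ with hρdef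
  have hρ : IsDensityMatrix ρ := by
    refine ⟨(ChiConcave.posSemidef_real_smul hρ₁.1 ht₀).add
      (ChiConcave.posSemidef_real_smul hρ₂.1 ht1'), ?_⟩
    rw [hρdef, Matrix.trace_add, Matrix.trace_smul, Matrix.trace_smul, hρ₁.2, hρ₂.2]
    simp only [smul_eq_mul, mul_one]
    push_cast; ring
  rw [ge_iff_le]
  by_contra hcon
  push_neg at hcon
  set ε : ℝ := (t * cHolevoCap N ρ₁ + (1 - t) * cHolevoCap N ρ₂) - cHolevoCap N ρ with hεdef
  have hε : 0 < ε := by rw [hεdef]; linarith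
  obtain ⟨n₁, p₁, v₁, hp₁0, hp₁s, hv₁, hc₁, hx₁⟩ :=
    ChiConcave.cHolevoCap_exists_near N hρ₁ (show cHolevoCap N ρ₁ - ε/2 < cHolevoCap N ρ₁ by linarith)
  obtain ⟨n₂, p₂, v₂, hp₂0, hp₂s, hv₂, hc₂, hx₂⟩ :=
    ChiConcave.cHolevoCap_exists_near N hρ₂ (show cHolevoCap N ρ₂ - ε/2 < cHolevoCap N ρ₂ by linarith)
  -- combined ensemble
  set p : Fin (n₁ + n₂) → ℝ := Fin.append (fun i => t * p₁ i) (fun i => (1 - t) * p₂ i) with hpdef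
  set v : Fin (n₁ + n₂) → Fin dI → ℂ := Fin.append v₁ v₂ with hvdef
  have hp0 : ∀ i, 0 ≤ p i := by
    intro i
    refine Fin.addCases (fun j => ?_) (fun j => ?_) i
    · rw [hpdef, Fin.append_left]; exact mul_nonneg ht₀ (hp₁0 j)
    · rw [hpdef, Fin.append_right]; exact mul_nonneg ht1' (hp₂0 j)
  have hps : ∑ i, p i = 1 := by
    rw [hpdef, Fin.sum_univ_add]
    simp only [Fin.append_left, Fin.append_right]
    rw [← Finset.mul_sum, ← Finset.mul_sum, hp₁s, hp₂s]
    ring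
  have hv : ∀ i, IsUnitVec (v i) := by
    intro i
    refine Fin.addCases (fun j => ?_) (fun j => ?_) i
    · rw [hvdef, Fin.append_left]; exact hv₁ j
    · rw [hvdef, Fin.append_right]; exact hv₂ j
  have hc : (∑ i, (p i : ℂ) • outer (v i)) = ρ := by
    rw [hpdef, hvdef, Fin.sum_univ_add]
    simp only [Fin.append_left, Fin.append_right]
    have e1 : ∑ i, ((t * p₁ i : ℝ) : ℂ) • outer (v₁ i)
        = (t : ℂ) • ∑ i, ((p₁ i : ℝ) : ℂ) • outer (v₁ i) := by
      rw [Finset.smul_sum]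
      refine Finset.sum_congr rfl fun i _ => ?_
      rw [smul_smul]
      norm_cast
    have e2 : ∑ i, (((1 - t) * p₂ i : ℝ) : ℂ) • outer (v₂ i)
        = ((1 - t : ℝ) : ℂ) • ∑ i, ((p₂ i : ℝ) : ℂ) • outer (v₂ i) := by
      rw [Finset.smul_sum]
      refine Finset.sum_congr rfl fun i _ => ?_
      rw [smul_smul]
      norm_cast
    rw [e1, e2, hc₁, hc₂]
  have hval : ∑ i, p i * vNEntropy (N.app (outer (v i)))
      = t * (∑ i, p₁ i * vNEntropy (N.app (outer (v₁ i))))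
        + (1 - t) * (∑ i, p₂ i * vNEntropy (N.app (outer (v₂ i)))) := by
    rw [hpdef, hvdef, Fin.sum_univ_add]
    simp only [Fin.append_left, Fin.append_right]
    rw [Finset.mul_sum, Finset.mul_sum]
    congr 1 <;> exact Finset.sum_congr rfl fun i _ => (mul_assoc _ _ _)
  have hle := ChiConcave.mem_le_cHolevoCap N ρ hp0 hps hv hc
  rw [hval] at hle
  -- entropy concavity
  have happ : N.app ρ = (t : ℂ) • N.app ρ₁ + ((1 - t : ℝ) : ℂ) • N.app ρ₂ := by
    rw [hρdef, ChiConcave.app_add, ChiConcave.app_smul, ChiConcave.app_smul]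
  have hconc : t * vNEntropy (N.app ρ₁) + (1 - t) * vNEntropy (N.app ρ₂)
      ≤ vNEntropy (N.app ρ) := by
    rw [happ]
    exact ChiConcave.vNEntropy_concave (ChiConcave.app_density N hρ₁)
      (ChiConcave.app_density N hρ₂) ht₀ ht₁
  -- assemble
  have m1 : t * (cHolevoCap N ρ₁ - ε/2)
      ≤ t * (vNEntropy (N.app ρ₁) - ∑ i, p₁ i * vNEntropy (N.app (outer (v₁ i)))) :=
    mul_le_mul_of_nonneg_left hx₁.le ht₀
  have m2 : (1 - t) * (cHolevoCap N ρ₂ - ε/2)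
      ≤ (1 - t) * (vNEntropy (N.app ρ₂) - ∑ i, p₂ i * vNEntropy (N.app (outer (v₂ i)))) :=
    mul_le_mul_of_nonneg_left hx₂.le ht1'
  have hid : t * (cHolevoCap N ρ₁ - ε/2) + (1 - t) * (cHolevoCap N ρ₂ - ε/2)
      = (t * cHolevoCap N ρ₁ + (1 - t) * cHolevoCap N ρ₂) - ε/2 := by ring
  have m3 : t * (vNEntropy (N.app ρ₁) - ∑ i, p₁ i * vNEntropy (N.app (outer (v₁ i))))
      + (1 - t) * (vNEntropy (N.app ρ₂) - ∑ i, p₂ i * vNEntropy (N.app (outer (v₂ i))))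
      ≤ vNEntropy (N.app ρ)
        - (t * (∑ i, p₁ i * vNEntropy (N.app (outer (v₁ i))))
          + (1 - t) * (∑ i, p₂ i * vNEntropy (N.app (outer (v₂ i))))) := by
    nlinarith [hconc]
  linarith

end
end

section
/- Let N be a quantum channel and let ρ0 be a positive definite density matrix on its input space. Then there exists a Hermitian matrix τ on the input space such that χ_N(ρ) ≤ χ_N(ρ0) + Tr(τ(ρ − ρ0)) for every density matrix ρ on the input space (a supporting linear functional for the concave function χ_N at the interior point ρ0). -/
open scoped Kronecker Matrix ComplexOrder

noncomputable section

namespace Aux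
set_option linter.unusedSectionVars false
open Pointwise

open Matrix

variable {n : Type} [Fintype n] [DecidableEq n]

lemma vNEntropy_eq {ρ : Matrix n n ℂ} (h : ρ.IsHermitian) :
    vNEntropy ρ = ∑ i, Real.negMulLog (h.eigenvalues i) := by
  rw [vNEntropy, dif_pos h, ← Finset.sum_neg_distrib]
  simp [Real.negMulLog]

lemma unitary_row_normsq {M : Matrix n n ℂ} (hM : M ∈ Matrix.unitaryGroup n ℂ) (k : n) :
    ∑ j, ‖M k j‖ ^ 2 = 1 := by
  have h1 : (M * star M) k k = 1 := by
    rw [(Matrix.mem_unitaryGroup_iff).mp hM]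
    simp
  rw [Matrix.mul_apply] at h1
  have h2 : ∀ j, M k j * star M j k = ((‖M k j‖ ^ 2 : ℝ) : ℂ) := by
    intro j
    rw [Matrix.star_apply, Complex.star_def, Complex.mul_conj]
    norm_cast
    simp [Complex.normSq_eq_norm_sq]
  rw [Finset.sum_congr rfl fun j _ => h2 j] at h1
  exact_mod_cast h1

lemma unitary_col_normsq {M : Matrix n n ℂ} (hM : M ∈ Matrix.unitaryGroup n ℂ) (j : n) :
    ∑ k, ‖M k j‖ ^ 2 = 1 := by
  have := unitary_row_normsq (M := star M) (Unitary.star_mem hM) j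
  simpa [Matrix.star_apply] using this

lemma outer_conjTranspose (v : n → ℂ) : (outer v)ᴴ = outer v := by
  ext i j
  simp [outer, Matrix.vecMulVec_apply, Matrix.conjTranspose_apply, mul_comm]

lemma outer_isHermitian (v : n → ℂ) : (outer v).IsHermitian := outer_conjTranspose v

lemma outer_posSemidef (v : n → ℂ) : (outer v).PosSemidef := by
  refine Matrix.PosSemidef.of_dotProduct_mulVec_nonneg (outer_isHermitian v) fun x => ?_
  have h1 : dotProduct (star x) ((outer v) *ᵥ x) =
      (star x ⬝ᵥ v) * star (star x ⬝ᵥ v) := by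
    simp only [dotProduct, Matrix.mulVec, outer, Matrix.vecMulVec_apply, dotProduct,
      star_sum, star_mul', star_star, Pi.star_apply, Finset.mul_sum, Finset.sum_mul]
    rw [Finset.sum_comm]
    congr 1; ext i; congr 1; ext j; ring
  rw [h1, Complex.star_def, Complex.mul_conj]
  exact Complex.zero_le_real.2 (Complex.normSq_nonneg _)

lemma trace_outer (v : n → ℂ) : (outer v).trace = ((∑ a, ‖v a‖ ^ 2 : ℝ) : ℂ) := by
  rw [Matrix.trace]
  push_cast
  refine Finset.sum_congr rfl fun a _ => ?_
  simp only [Matrix.diag_apply, outer, Matrix.vecMulVec_apply, Pi.star_apply,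
    Complex.star_def, Complex.mul_conj]
  norm_cast
  simp [Complex.normSq_eq_norm_sq]

lemma trace_outer_of_unit {v : n → ℂ} (hv : IsUnitVec v) : (outer v).trace = 1 := by
  rw [trace_outer, hv, Complex.ofReal_one]

lemma trace_eq_sum_eigenvalues {ρ : Matrix n n ℂ} (h : ρ.IsHermitian) :
    ρ.trace = ∑ i, (h.eigenvalues i : ℂ) := by
  conv_lhs => rw [h.spectral_theorem, Unitary.conjStarAlgAut_apply]
  rw [Matrix.trace_mul_cycle]
  rw [(Matrix.mem_unitaryGroup_iff').mp (Matrix.IsHermitian.eigenvectorUnitary h).2, one_mul]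
  simp [Matrix.trace_diagonal]

lemma eigenvalue_le_one {ρ : Matrix n n ℂ} (hρ : ρ.PosSemidef) (htr : ρ.trace = 1) (i : n) :
    hρ.isHermitian.eigenvalues i ≤ 1 := by
  have h1 : (∑ j, (hρ.isHermitian.eigenvalues j : ℂ)) = 1 := by
    rw [← trace_eq_sum_eigenvalues hρ.isHermitian, htr]
  have h2 : (∑ j, hρ.isHermitian.eigenvalues j) = 1 := by exact_mod_cast h1
  calc hρ.isHermitian.eigenvalues i ≤ ∑ j, hρ.isHermitian.eigenvalues j :=
        Finset.single_le_sum (fun j _ => hρ.eigenvalues_nonneg j) (Finset.mem_univ i)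
    _ = 1 := h2

lemma vNEntropy_nonneg {ρ : Matrix n n ℂ} (hρ : ρ.PosSemidef) (htr : ρ.trace = 1) :
    0 ≤ vNEntropy ρ := by
  rw [vNEntropy_eq hρ.isHermitian]
  exact Finset.sum_nonneg fun i _ => Real.negMulLog_nonneg (hρ.eigenvalues_nonneg i)
    (eigenvalue_le_one hρ htr i)


lemma conj_mul_self (z : ℂ) : (starRingEnd ℂ) z * z = ((‖z‖ ^ 2 : ℝ) : ℂ) := by
  rw [mul_comm, Complex.mul_conj]
  norm_cast
  simp [Complex.normSq_eq_norm_sq]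

lemma dotProduct_eigen {σ : Matrix n n ℂ} (h : σ.IsHermitian) (v : n → ℂ) :
    dotProduct (star v) (σ *ᵥ v) =
      ((∑ k, h.eigenvalues k *
        ‖((star (h.eigenvectorUnitary : Matrix n n ℂ)) *ᵥ v) k‖ ^ 2 : ℝ) : ℂ) := by
  have hsw : star ((star (h.eigenvectorUnitary : Matrix n n ℂ)) *ᵥ v)
      = Matrix.vecMul (star v) (h.eigenvectorUnitary : Matrix n n ℂ) := by
    rw [Matrix.star_mulVec, Matrix.star_eq_conjTranspose, Matrix.conjTranspose_conjTranspose]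
  conv_lhs => rw [h.spectral_theorem, Unitary.conjStarAlgAut_apply, ← Matrix.mulVec_mulVec, ← Matrix.mulVec_mulVec,
    dotProduct_mulVec, ← hsw]
  push_cast
  rw [dotProduct]
  refine Finset.sum_congr rfl fun k _ => ?_
  rw [Matrix.mulVec_diagonal]
  simp only [Pi.star_apply, Function.comp_apply]
  calc (starRingEnd ℂ) (((star (h.eigenvectorUnitary : Matrix n n ℂ)) *ᵥ v) k) *
        ((h.eigenvalues k : ℂ) * ((star (h.eigenvectorUnitary : Matrix n n ℂ)) *ᵥ v) k)
      = (h.eigenvalues k : ℂ) *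
        ((starRingEnd ℂ) (((star (h.eigenvectorUnitary : Matrix n n ℂ)) *ᵥ v) k) *
          ((star (h.eigenvectorUnitary : Matrix n n ℂ)) *ᵥ v) k) := by ring
    _ = _ := by rw [conj_mul_self]; push_cast; ring

section Channel

variable {I O : Type} [Fintype I] [DecidableEq I] [Fintype O] [DecidableEq O]
  (N : QChannel I O)

lemma app_posSemidef {ρ : Matrix I I ℂ} (hρ : ρ.PosSemidef) : (N.app ρ).PosSemidef := by
  unfold QChannel.app
  exact Finset.sum_induction _ Matrix.PosSemidef (fun a b ha hb => ha.add hb)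
    Matrix.PosSemidef.zero (fun k _ => hρ.mul_mul_conjTranspose_same (N.A k))

lemma app_trace (ρ : Matrix I I ℂ) : (N.app ρ).trace = ρ.trace := by
  unfold QChannel.app
  rw [Matrix.trace_sum]
  have h1 : ∀ k, (N.A k * ρ * (N.A k)ᴴ).trace = ((N.A k)ᴴ * (N.A k) * ρ).trace := fun k => by
    rw [Matrix.trace_mul_cycle, Matrix.mul_assoc]
  rw [Finset.sum_congr rfl fun k _ => h1 k, ← Matrix.trace_sum]
  have h2 : ∑ k, (N.A k)ᴴ * N.A k * ρ = (∑ k, (N.A k)ᴴ * N.A k) * ρ :=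
    (Finset.sum_mul _ _ _).symm
  rw [h2, N.complete, Matrix.one_mul]

lemma app_density {ρ : Matrix I I ℂ} (hρ : IsDensityMatrix ρ) : IsDensityMatrix (N.app ρ) :=
  ⟨app_posSemidef N hρ.1, by rw [app_trace, hρ.2]⟩

lemma app_add (ρ σ : Matrix I I ℂ) : N.app (ρ + σ) = N.app ρ + N.app σ := by
  unfold QChannel.app
  rw [← Finset.sum_add_distrib]
  refine Finset.sum_congr rfl fun k _ => ?_
  rw [Matrix.mul_add, Matrix.add_mul]

lemma app_smul (c : ℂ) (ρ : Matrix I I ℂ) : N.app (c • ρ) = c • N.app ρ := by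
  unfold QChannel.app
  rw [Finset.smul_sum]
  refine Finset.sum_congr rfl fun k _ => ?_
  rw [Matrix.mul_smul, Matrix.smul_mul]

end Channel


lemma sum_mulVec' {ι : Type} (s : Finset ι) (M : ι → Matrix n n ℂ) (x : n → ℂ) :
    (∑ i ∈ s, M i) *ᵥ x = ∑ i ∈ s, M i *ᵥ x := by
  ext k
  simp [Matrix.mulVec, dotProduct, Matrix.sum_apply, Finset.sum_mul]
  rw [Finset.sum_comm]

lemma dotProduct_sum' {ι : Type} (s : Finset ι) (u : n → ℂ) (w : ι → n → ℂ) :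
    dotProduct u (∑ i ∈ s, w i) = ∑ i ∈ s, dotProduct u (w i) := by
  simp [dotProduct, Finset.mul_sum]
  rw [Finset.sum_comm]

lemma vNEntropy_concave {ι : Type} [Fintype ι] (lam : ι → ℝ) (hlam : ∀ i, 0 ≤ lam i)
    (hsum : ∑ i, lam i = 1) (σ : ι → Matrix n n ℂ) (hσ : ∀ i, (σ i).PosSemidef) :
    ∑ i, lam i * vNEntropy (σ i) ≤ vNEntropy (∑ i, (lam i : ℂ) • σ i) := by
  have hmixH : (∑ i, (lam i : ℂ) • σ i).IsHermitian := by
    unfold Matrix.IsHermitian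
    rw [Matrix.conjTranspose_sum]
    refine Finset.sum_congr rfl fun i _ => ?_
    rw [Matrix.conjTranspose_smul, (hσ i).isHermitian]
    congr 1
    simp [Complex.star_def, Complex.conj_ofReal]
  set v : n → n → ℂ := fun j => ⇑(hmixH.eigenvectorBasis j) with hv
  set c : ι → n → n → ℝ := fun i j k =>
    ‖((star (((hσ i).isHermitian.eigenvectorUnitary : Matrix n n ℂ))) *ᵥ v j) k‖ ^ 2 with hc
  have hcnn : ∀ i j k, 0 ≤ c i j k := fun i j k => by positivity
  have hM : ∀ i j k, ((star (((hσ i).isHermitian.eigenvectorUnitary : Matrix n n ℂ))) *ᵥ v j) k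
      = ((star (((hσ i).isHermitian.eigenvectorUnitary : Matrix n n ℂ))) *
         (hmixH.eigenvectorUnitary : Matrix n n ℂ)) k j := by
    intro i j k
    simp [Matrix.mulVec, Matrix.mul_apply, hv, dotProduct]
  have hUni : ∀ i, ((star (((hσ i).isHermitian.eigenvectorUnitary : Matrix n n ℂ))) *
      (hmixH.eigenvectorUnitary : Matrix n n ℂ)) ∈ Matrix.unitaryGroup n ℂ := fun i =>
    mul_mem (Unitary.star_mem ((hσ i).isHermitian.eigenvectorUnitary).2)
      (hmixH.eigenvectorUnitary).2
  have hc1 : ∀ i j, ∑ k, c i j k = 1 := by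
    intro i j
    simp only [hc, hM]
    exact unitary_col_normsq (hUni i) j
  have hc2 : ∀ i k, ∑ j, c i j k = 1 := by
    intro i k
    simp only [hc, hM]
    exact unitary_row_normsq (hUni i) k
  have hr : ∀ j, hmixH.eigenvalues j
      = ∑ i, lam i * ∑ k, (hσ i).isHermitian.eigenvalues k * c i j k := by
    intro j
    rw [Matrix.IsHermitian.eigenvalues_eq]
    have h1 : dotProduct (star (v j)) ((∑ i, (lam i : ℂ) • σ i) *ᵥ v j)
        = ((∑ i, lam i * ∑ k, (hσ i).isHermitian.eigenvalues k * c i j k : ℝ) : ℂ) := by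
      rw [sum_mulVec', dotProduct_sum']
      push_cast
      refine Finset.sum_congr rfl fun i _ => ?_
      rw [Matrix.smul_mulVec, dotProduct_smul,
        dotProduct_eigen (hσ i).isHermitian (v j)]
      simp only [smul_eq_mul, hc]
      norm_cast
    rw [h1, RCLike.re_to_complex, Complex.ofReal_re]
  have jensen : ∀ j, ∑ p : ι × n, (lam p.1 * c p.1 j p.2) *
      Real.negMulLog ((hσ p.1).isHermitian.eigenvalues p.2) ≤
      Real.negMulLog (hmixH.eigenvalues j) := by
    intro j
    have h0 : ∀ p : ι × n, p ∈ Finset.univ → 0 ≤ lam p.1 * c p.1 j p.2 :=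
      fun p _ => mul_nonneg (hlam p.1) (hcnn p.1 j p.2)
    have h1 : ∑ p : ι × n, lam p.1 * c p.1 j p.2 = 1 := by
      rw [Fintype.sum_prod_type]
      calc ∑ i, ∑ k, lam i * c i j k = ∑ i, lam i * ∑ k, c i j k := by
            refine Finset.sum_congr rfl fun i _ => ?_
            rw [Finset.mul_sum]
        _ = 1 := by
            rw [Finset.sum_congr rfl fun i _ => by rw [hc1 i j]]
            simpa using hsum
    have hmem : ∀ p : ι × n, p ∈ Finset.univ →
        (hσ p.1).isHermitian.eigenvalues p.2 ∈ Set.Ici (0:ℝ) :=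
      fun p _ => (hσ p.1).eigenvalues_nonneg p.2
    have := Real.concaveOn_negMulLog.le_map_sum h0 h1 hmem
    simp only [smul_eq_mul] at this
    refine this.trans_eq ?_
    congr 1
    rw [hr j, Fintype.sum_prod_type]
    refine Finset.sum_congr rfl fun i _ => ?_
    rw [Finset.mul_sum]
    exact Finset.sum_congr rfl fun k _ => by ring
  calc ∑ i, lam i * vNEntropy (σ i)
      = ∑ i, ∑ k, lam i * Real.negMulLog ((hσ i).isHermitian.eigenvalues k) := by
        refine Finset.sum_congr rfl fun i _ => ?_
        rw [vNEntropy_eq (hσ i).isHermitian, Finset.mul_sum]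
    _ = ∑ i, ∑ k, ∑ j, (lam i * c i j k) *
          Real.negMulLog ((hσ i).isHermitian.eigenvalues k) := by
        refine Finset.sum_congr rfl fun i _ => Finset.sum_congr rfl fun k _ => ?_
        rw [← Finset.sum_mul, ← Finset.mul_sum, hc2 i k, mul_one]
    _ = ∑ j, ∑ p : ι × n, (lam p.1 * c p.1 j p.2) *
          Real.negMulLog ((hσ p.1).isHermitian.eigenvalues p.2) := by
        rw [Finset.sum_congr rfl fun (j : n) (_ : j ∈ Finset.univ) =>
          (Fintype.sum_prod_type (fun p : ι × n =>
            lam p.1 * c p.1 j p.2 * Real.negMulLog ((hσ p.1).isHermitian.eigenvalues p.2)))]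
        refine Eq.trans (Finset.sum_congr rfl fun i _ => Finset.sum_comm) ?_
        exact Finset.sum_comm
    _ ≤ ∑ j, Real.negMulLog (hmixH.eigenvalues j) :=
        Finset.sum_le_sum fun j _ => jensen j
    _ = vNEntropy (∑ i, (lam i : ℂ) • σ i) := (vNEntropy_eq hmixH).symm

lemma posSemidef_real_smul {c : ℝ} (hc : 0 ≤ c) {ρ : Matrix n n ℂ} (hρ : ρ.PosSemidef) :
    ((c : ℂ) • ρ).PosSemidef := by
  refine Matrix.PosSemidef.of_dotProduct_mulVec_nonneg ?_ fun x => ?_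
  · unfold Matrix.IsHermitian
    rw [Matrix.conjTranspose_smul, hρ.isHermitian]
    congr 1
    simp [Complex.star_def, Complex.conj_ofReal]
  · rw [Matrix.smul_mulVec, dotProduct_smul, smul_eq_mul]
    exact mul_nonneg (by exact_mod_cast hc) (hρ.dotProduct_mulVec_nonneg x)

lemma spectral_ensemble {d : ℕ} {ρ : Matrix (Fin d) (Fin d) ℂ} (hρ : IsDensityMatrix ρ) :
    ∃ (p : Fin d → ℝ) (v : Fin d → Fin d → ℂ), (∀ i, 0 ≤ p i) ∧ (∑ i, p i = 1) ∧
      (∀ i, IsUnitVec (v i)) ∧ (∑ i, (p i : ℂ) • outer (v i)) = ρ := by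
  have h := hρ.1.isHermitian
  refine ⟨h.eigenvalues, fun i a => (h.eigenvectorUnitary : Matrix (Fin d) (Fin d) ℂ) a i,
    fun i => hρ.1.eigenvalues_nonneg i, ?_, ?_, ?_⟩
  · have h1 : ρ.trace = ∑ i, (h.eigenvalues i : ℂ) := trace_eq_sum_eigenvalues h
    rw [hρ.2] at h1
    exact_mod_cast h1.symm
  · exact fun i => unitary_col_normsq h.eigenvectorUnitary.2 i
  · conv_rhs => rw [h.spectral_theorem, Unitary.conjStarAlgAut_apply]
    rw [show (RCLike.ofReal ∘ h.eigenvalues : Fin d → ℂ) = (fun i => (h.eigenvalues i : ℂ))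
      from rfl]
    ext a b
    simp only [Matrix.sum_apply, Matrix.smul_apply, outer, Matrix.vecMulVec_apply,
      Pi.star_apply, smul_eq_mul, Matrix.mul_apply, Matrix.mul_diagonal, Matrix.star_apply,
      Function.comp_apply, Complex.star_def]
    refine Finset.sum_congr rfl fun i _ => ?_
    rw [Finset.sum_eq_single i (fun x _ hx => by
      rw [Matrix.diagonal_apply_ne _ hx, mul_zero]) (by simp)]
    rw [Matrix.diagonal_apply_eq]
    ring

section Cap

variable {dI dO : ℕ} (N : QChannel (Fin dI) (Fin dO))

def capSet (ρ : Matrix (Fin dI) (Fin dI) ℂ) : Set ℝ :=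
  { x | ∃ (n : ℕ) (p : Fin n → ℝ) (v : Fin n → Fin dI → ℂ),
    (∀ i, 0 ≤ p i) ∧ (∑ i, p i = 1) ∧ (∀ i, IsUnitVec (v i)) ∧
    (∑ i, (p i : ℂ) • outer (v i)) = ρ ∧
    x = vNEntropy (N.app ρ) - ∑ i, p i * vNEntropy (N.app (outer (v i))) }

lemma cHolevoCap_eq (ρ : Matrix (Fin dI) (Fin dI) ℂ) :
    cHolevoCap N ρ = sSup (capSet N ρ) := rfl

lemma outer_density {v : Fin dI → ℂ} (hv : IsUnitVec v) : IsDensityMatrix (outer v) :=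
  ⟨outer_posSemidef v, trace_outer_of_unit hv⟩

lemma capSet_nonempty {ρ : Matrix (Fin dI) (Fin dI) ℂ} (hρ : IsDensityMatrix ρ) :
    (capSet N ρ).Nonempty := by
  obtain ⟨p, v, h1, h2, h3, h4⟩ := spectral_ensemble hρ
  exact ⟨_, dI, p, v, h1, h2, h3, h4, rfl⟩

lemma capSet_le {ρ : Matrix (Fin dI) (Fin dI) ℂ} (hρ : IsDensityMatrix ρ) {x : ℝ}
    (hx : x ∈ capSet N ρ) : x ≤ vNEntropy (N.app ρ) := by
  obtain ⟨m, p, v, h1, h2, h3, h4, h5⟩ := hx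
  rw [h5]
  have : 0 ≤ ∑ i, p i * vNEntropy (N.app (outer (v i))) :=
    Finset.sum_nonneg fun i _ => mul_nonneg (h1 i)
      (vNEntropy_nonneg (app_posSemidef N (outer_posSemidef (v i)))
        (by rw [app_trace, trace_outer_of_unit (h3 i)]))
  linarith

lemma capSet_bddAbove {ρ : Matrix (Fin dI) (Fin dI) ℂ} (hρ : IsDensityMatrix ρ) :
    BddAbove (capSet N ρ) :=
  ⟨vNEntropy (N.app ρ), fun _ hx => capSet_le N hρ hx⟩

lemma le_cHolevoCap {ρ : Matrix (Fin dI) (Fin dI) ℂ} (hρ : IsDensityMatrix ρ) {x : ℝ}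
    (hx : x ∈ capSet N ρ) : x ≤ cHolevoCap N ρ :=
  le_csSup (capSet_bddAbove N hρ) hx

lemma cHolevoCap_le {ρ : Matrix (Fin dI) (Fin dI) ℂ} (hρ : IsDensityMatrix ρ) {M : ℝ}
    (hM : ∀ x ∈ capSet N ρ, x ≤ M) : cHolevoCap N ρ ≤ M :=
  csSup_le (capSet_nonempty N hρ) hM

end Cap

section Cap2

variable {dI dO : ℕ} (N : QChannel (Fin dI) (Fin dO))

lemma mix_density {ρ₁ ρ₂ : Matrix (Fin dI) (Fin dI) ℂ} (h₁ : IsDensityMatrix ρ₁)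
    (h₂ : IsDensityMatrix ρ₂) {a b : ℝ} (ha : 0 ≤ a) (hb : 0 ≤ b) (hab : a + b = 1) :
    IsDensityMatrix ((a : ℂ) • ρ₁ + (b : ℂ) • ρ₂) := by
  refine ⟨(posSemidef_real_smul ha h₁.1).add (posSemidef_real_smul hb h₂.1), ?_⟩
  rw [Matrix.trace_add, Matrix.trace_smul, Matrix.trace_smul, h₁.2, h₂.2]
  simp only [smul_eq_mul, mul_one]
  exact_mod_cast congrArg (Complex.ofReal) hab

lemma entropy_mix_ge {ρ₁ ρ₂ : Matrix (Fin dI) (Fin dI) ℂ} (h₁ : IsDensityMatrix ρ₁)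
    (h₂ : IsDensityMatrix ρ₂) {a b : ℝ} (ha : 0 ≤ a) (hb : 0 ≤ b) (hab : a + b = 1) :
    a * vNEntropy (N.app ρ₁) + b * vNEntropy (N.app ρ₂)
      ≤ vNEntropy (N.app ((a : ℂ) • ρ₁ + (b : ℂ) • ρ₂)) := by
  have happ : N.app ((a : ℂ) • ρ₁ + (b : ℂ) • ρ₂)
      = ∑ i : Fin 2, ((![a, b] i : ℝ) : ℂ) • (![N.app ρ₁, N.app ρ₂] i) := by
    rw [app_add, app_smul, app_smul, Fin.sum_univ_two]
    simp
  rw [happ]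
  have hlam : ∀ i : Fin 2, 0 ≤ (![a, b] : Fin 2 → ℝ) i := by
    intro i; fin_cases i <;> simpa
  have hpsd : ∀ i : Fin 2, ((![N.app ρ₁, N.app ρ₂] : Fin 2 → Matrix (Fin dO) (Fin dO) ℂ) i).PosSemidef := by
    intro i
    fin_cases i
    · simpa using app_posSemidef N h₁.1
    · simpa using app_posSemidef N h₂.1
  have := vNEntropy_concave (n := Fin dO) ![a, b] hlam
    (by rw [Fin.sum_univ_two]; exact hab) ![N.app ρ₁, N.app ρ₂] hpsd
  rw [Fin.sum_univ_two] at this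
  simpa using this

lemma cap_key {ρ₁ ρ₂ : Matrix (Fin dI) (Fin dI) ℂ} (h₁ : IsDensityMatrix ρ₁)
    (h₂ : IsDensityMatrix ρ₂) {a b : ℝ} (ha : 0 ≤ a) (hb : 0 ≤ b) (hab : a + b = 1)
    {x₁ x₂ : ℝ} (hx₁ : x₁ ∈ capSet N ρ₁) (hx₂ : x₂ ∈ capSet N ρ₂) :
    a * x₁ + b * x₂ ≤ cHolevoCap N ((a : ℂ) • ρ₁ + (b : ℂ) • ρ₂) := by
  obtain ⟨n₁, p₁, v₁, hp₁, hs₁, hu₁, hm₁, he₁⟩ := hx₁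
  obtain ⟨n₂, p₂, v₂, hp₂, hs₂, hu₂, hm₂, he₂⟩ := hx₂
  set ρ := (a : ℂ) • ρ₁ + (b : ℂ) • ρ₂ with hρdef
  have hρd : IsDensityMatrix ρ := mix_density h₁ h₂ ha hb hab
  set p : Fin (n₁ + n₂) → ℝ := Fin.append (fun i => a * p₁ i) (fun i => b * p₂ i) with hp
  set v : Fin (n₁ + n₂) → Fin dI → ℂ := Fin.append v₁ v₂ with hv
  have hsumsplit : ∀ (g : Fin (n₁ + n₂) → ℝ), ∑ i, g i
      = ∑ i, g (Fin.castAdd n₂ i) + ∑ i, g (Fin.natAdd n₁ i) := fun g => Fin.sum_univ_add g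
  have hmem : (vNEntropy (N.app ρ) - ∑ i, p i * vNEntropy (N.app (outer (v i))))
      ∈ capSet N ρ := by
    refine ⟨n₁ + n₂, p, v, ?_, ?_, ?_, ?_, rfl⟩
    · intro i
      refine Fin.addCases (fun j => ?_) (fun j => ?_) i
      · rw [hp, Fin.append_left]; exact mul_nonneg ha (hp₁ j)
      · rw [hp, Fin.append_right]; exact mul_nonneg hb (hp₂ j)
    · rw [Fin.sum_univ_add]
      simp only [hp, Fin.append_left, Fin.append_right]
      rw [← Finset.mul_sum, ← Finset.mul_sum, hs₁, hs₂]
      simpa using hab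
    · intro i
      refine Fin.addCases (fun j => ?_) (fun j => ?_) i
      · rw [hv, Fin.append_left]; exact hu₁ j
      · rw [hv, Fin.append_right]; exact hu₂ j
    · rw [Fin.sum_univ_add]
      simp only [hp, hv, Fin.append_left, Fin.append_right]
      push_cast
      rw [hρdef, ← hm₁, ← hm₂, Finset.smul_sum, Finset.smul_sum]
      congr 1
      · exact Finset.sum_congr rfl fun j _ => by rw [smul_smul]
      · exact Finset.sum_congr rfl fun j _ => by rw [smul_smul]
  have hval : a * x₁ + b * x₂
      ≤ vNEntropy (N.app ρ) - ∑ i, p i * vNEntropy (N.app (outer (v i))) := by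
    rw [he₁, he₂, Fin.sum_univ_add]
    simp only [hp, hv, Fin.append_left, Fin.append_right]
    have hsplit : ∑ i, a * p₁ i * vNEntropy (N.app (outer (v₁ i)))
        = a * ∑ i, p₁ i * vNEntropy (N.app (outer (v₁ i))) := by
      rw [Finset.mul_sum]; exact Finset.sum_congr rfl fun i _ => by ring
    have hsplit2 : ∑ i, b * p₂ i * vNEntropy (N.app (outer (v₂ i)))
        = b * ∑ i, p₂ i * vNEntropy (N.app (outer (v₂ i))) := by
      rw [Finset.mul_sum]; exact Finset.sum_congr rfl fun i _ => by ring
    rw [hsplit, hsplit2]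
    have := entropy_mix_ge N h₁ h₂ ha hb hab
    rw [← hρdef] at this
    nlinarith [this]
  exact hval.trans (le_cHolevoCap N hρd hmem)

lemma cHolevoCap_concave {ρ₁ ρ₂ : Matrix (Fin dI) (Fin dI) ℂ} (h₁ : IsDensityMatrix ρ₁)
    (h₂ : IsDensityMatrix ρ₂) {a b : ℝ} (ha : 0 ≤ a) (hb : 0 ≤ b) (hab : a + b = 1) :
    a * cHolevoCap N ρ₁ + b * cHolevoCap N ρ₂
      ≤ cHolevoCap N ((a : ℂ) • ρ₁ + (b : ℂ) • ρ₂) := by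
  set M := cHolevoCap N ((a : ℂ) • ρ₁ + (b : ℂ) • ρ₂) with hMdef
  have smul_le : ∀ (c : ℝ), 0 ≤ c → ∀ (ρ : Matrix (Fin dI) (Fin dI) ℂ),
      IsDensityMatrix ρ → ∀ (K : ℝ), (∀ x ∈ capSet N ρ, c * x ≤ K) →
      c * cHolevoCap N ρ ≤ K := by
    intro c hc ρ hρ K hK
    rcases eq_or_lt_of_le hc with hc0 | hc0
    · obtain ⟨x, hx⟩ := capSet_nonempty N hρ
      have := hK x hx
      rw [← hc0] at this ⊢
      simpa using this
    · have h1 : cHolevoCap N ρ ≤ K / c := cHolevoCap_le N hρ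
        (fun x hx => (le_div_iff₀ hc0).2 (by rw [mul_comm]; exact hK x hx))
      calc c * cHolevoCap N ρ ≤ c * (K / c) :=
            mul_le_mul_of_nonneg_left h1 hc
        _ = K := by field_simp
  have step1 : ∀ x₁ ∈ capSet N ρ₁, a * x₁ + b * cHolevoCap N ρ₂ ≤ M := by
    intro x₁ hx₁
    have := smul_le b hb ρ₂ h₂ (M - a * x₁) (fun x₂ hx₂ => by
      have := cap_key N h₁ h₂ ha hb hab hx₁ hx₂
      linarith)
    linarith
  have step2 : a * cHolevoCap N ρ₁ + b * cHolevoCap N ρ₂ ≤ M := by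
    have := smul_le a ha ρ₁ h₁ (M - b * cHolevoCap N ρ₂) (fun x₁ hx₁ => by
      have := step1 x₁ hx₁
      linarith)
    linarith
  exact step2

end Cap2

lemma conj_diagonal_ofReal {d : ℕ} {A : Matrix (Fin d) (Fin d) ℂ} (hA : A.IsHermitian)
    (c t : ℝ) :
    (hA.eigenvectorUnitary : Matrix (Fin d) (Fin d) ℂ) *
        Matrix.diagonal (fun i => ((c + t * hA.eigenvalues i : ℝ) : ℂ)) *
        star (hA.eigenvectorUnitary : Matrix (Fin d) (Fin d) ℂ)
      = (c : ℂ) • 1 + (t : ℂ) • A := by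
  have h1 : Matrix.diagonal (fun i => ((c + t * hA.eigenvalues i : ℝ) : ℂ))
      = (c : ℂ) • (1 : Matrix (Fin d) (Fin d) ℂ)
        + (t : ℂ) • Matrix.diagonal (fun i => (hA.eigenvalues i : ℂ)) := by
    ext i j
    by_cases hij : i = j
    · subst hij
      simp only [Matrix.diagonal_apply_eq, Matrix.add_apply, Matrix.smul_apply,
        Matrix.one_apply_eq, smul_eq_mul, mul_one]
      push_cast
      ring
    · simp [Matrix.diagonal_apply_ne _ hij, Matrix.one_apply_ne hij]
  rw [h1, Matrix.mul_add, Matrix.add_mul, Matrix.mul_smul, Matrix.smul_mul, Matrix.mul_one,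
    (Matrix.mem_unitaryGroup_iff).mp hA.eigenvectorUnitary.2, Matrix.mul_smul,
    Matrix.smul_mul]
  congr 2
  rw [show (Matrix.diagonal (fun i => (hA.eigenvalues i : ℂ)))
      = Matrix.diagonal (RCLike.ofReal ∘ hA.eigenvalues) from rfl]
  exact hA.spectral_theorem.symm

lemma psd_conj_diag {d : ℕ} {A : Matrix (Fin d) (Fin d) ℂ} (hA : A.IsHermitian)
    {f : Fin d → ℝ} (hf : ∀ i, 0 ≤ f i) :
    ((hA.eigenvectorUnitary : Matrix (Fin d) (Fin d) ℂ) *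
        Matrix.diagonal (fun i => ((f i : ℝ) : ℂ)) *
        star (hA.eigenvectorUnitary : Matrix (Fin d) (Fin d) ℂ)).PosSemidef := by
  rw [Matrix.star_eq_conjTranspose]
  exact (Matrix.PosSemidef.diagonal
    (fun i => Complex.zero_le_real.2 (hf i))).mul_mul_conjTranspose_same _

lemma exists_pos_step {d : ℕ} (hd : 0 < d) {ρ₀ δ : Matrix (Fin d) (Fin d) ℂ}
    (hρ₀ : ρ₀.PosDef) (hδ : δ.IsHermitian) :
    ∃ t : ℝ, 0 < t ∧ (ρ₀ + (t : ℂ) • δ).PosSemidef := by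
  have h := hρ₀.isHermitian
  have hne : (Finset.univ : Finset (Fin d)).Nonempty := ⟨⟨0, hd⟩, Finset.mem_univ _⟩
  obtain ⟨i₀, -, hmin⟩ := Finset.exists_min_image Finset.univ h.eigenvalues hne
  obtain ⟨j₀, -, hmax⟩ := Finset.exists_max_image Finset.univ
    (fun i => |hδ.eigenvalues i|) hne
  set μ := h.eigenvalues i₀ with hμdef
  have hμ : 0 < μ := hρ₀.eigenvalues_pos i₀
  set Mx := |hδ.eigenvalues j₀| with hMdef
  have hMx : 0 ≤ Mx := abs_nonneg _
  set t := μ / (1 + Mx) with htdef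
  have ht : 0 < t := by positivity
  refine ⟨t, ht, ?_⟩
  have e1 := conj_diagonal_ofReal h (-μ) 1
  have e2 := conj_diagonal_ofReal hδ μ t
  have hsum : ρ₀ + (t : ℂ) • δ
      = ((h.eigenvectorUnitary : Matrix (Fin d) (Fin d) ℂ) *
          Matrix.diagonal (fun i => ((-μ + 1 * h.eigenvalues i : ℝ) : ℂ)) *
          star (h.eigenvectorUnitary : Matrix (Fin d) (Fin d) ℂ))
        + ((hδ.eigenvectorUnitary : Matrix (Fin d) (Fin d) ℂ) *
          Matrix.diagonal (fun i => ((μ + t * hδ.eigenvalues i : ℝ) : ℂ)) *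
          star (hδ.eigenvectorUnitary : Matrix (Fin d) (Fin d) ℂ)) := by
    rw [e1, e2]
    push_cast
    module
  rw [hsum]
  refine Matrix.PosSemidef.add (psd_conj_diag h (fun i => ?_)) (psd_conj_diag hδ (fun i => ?_))
  · have := hmin i (Finset.mem_univ i)
    simp only [one_mul]
    linarith
  · have h1 : |hδ.eigenvalues i| ≤ Mx := hmax i (Finset.mem_univ i)
    have h2 : -Mx ≤ hδ.eigenvalues i := (abs_le.1 h1).1
    have h3 : t * Mx ≤ μ := by
      rw [htdef]
      rw [div_mul_eq_mul_div, div_le_iff₀ (by linarith)]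
      nlinarith
    nlinarith

section Grad

variable {dI dO : ℕ} (N : QChannel (Fin dI) (Fin dO)) (ρ₀ : Matrix (Fin dI) (Fin dI) ℂ)

def QS (δ : Matrix (Fin dI) (Fin dI) ℂ) : Set ℝ :=
  { y | ∃ t : ℝ, 0 < t ∧ (ρ₀ + (t : ℂ) • δ).PosSemidef ∧
      y = (cHolevoCap N (ρ₀ + (t : ℂ) • δ) - cHolevoCap N ρ₀) / t }

def qfn (δ : Matrix (Fin dI) (Fin dI) ℂ) : ℝ := sSup (QS N ρ₀ δ)

variable {ρ₀}

lemma density_step (hρ₀d : IsDensityMatrix ρ₀) {δ : Matrix (Fin dI) (Fin dI) ℂ}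
    (htrδ : δ.trace = 0) {t : ℝ} (hPSD : (ρ₀ + (t : ℂ) • δ).PosSemidef) :
    IsDensityMatrix (ρ₀ + (t : ℂ) • δ) := by
  refine ⟨hPSD, ?_⟩
  rw [Matrix.trace_add, Matrix.trace_smul, hρ₀d.2, htrδ]
  simp

lemma core_quot (hρ₀d : IsDensityMatrix ρ₀) {δ₁ δ₂ : Matrix (Fin dI) (Fin dI) ℂ}
    (htr₁ : δ₁.trace = 0) (htr₂ : δ₂.trace = 0) {t₁ t₂ : ℝ} (ht₁ : 0 < t₁) (ht₂ : 0 < t₂)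
    (hP₁ : (ρ₀ + (t₁ : ℂ) • δ₁).PosSemidef) (hP₂ : (ρ₀ + (t₂ : ℂ) • δ₂).PosSemidef) :
    ∃ T : ℝ, 0 < T ∧ (ρ₀ + (T : ℂ) • (δ₁ + δ₂)).PosSemidef ∧
      (cHolevoCap N (ρ₀ + (t₁ : ℂ) • δ₁) - cHolevoCap N ρ₀) / t₁
        + (cHolevoCap N (ρ₀ + (t₂ : ℂ) • δ₂) - cHolevoCap N ρ₀) / t₂
      ≤ (cHolevoCap N (ρ₀ + (T : ℂ) • (δ₁ + δ₂)) - cHolevoCap N ρ₀) / T := by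
  set T := t₁ * t₂ / (t₁ + t₂) with hT
  set a := t₂ / (t₁ + t₂) with ha
  set b := t₁ / (t₁ + t₂) with hb
  have htsum : 0 < t₁ + t₂ := by linarith
  have hTpos : 0 < T := by positivity
  have hapos : 0 ≤ a := by positivity
  have hbpos : 0 ≤ b := by positivity
  have hab : a + b = 1 := by
    rw [ha, hb, ← add_div, add_comm t₂ t₁, div_self htsum.ne']
  have hat : a * t₁ = T := by rw [ha, hT]; field_simp
  have hbt : b * t₂ = T := by rw [hb, hT]; field_simp
  have hmixid : (a : ℂ) • (ρ₀ + (t₁ : ℂ) • δ₁) + (b : ℂ) • (ρ₀ + (t₂ : ℂ) • δ₂)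
      = ρ₀ + (T : ℂ) • (δ₁ + δ₂) := by
    have h1 : (a : ℂ) + (b : ℂ) = 1 := by exact_mod_cast congrArg Complex.ofReal hab
    have h2 : (a : ℂ) * (t₁ : ℂ) = (T : ℂ) := by exact_mod_cast congrArg Complex.ofReal hat
    have h3 : (b : ℂ) * (t₂ : ℂ) = (T : ℂ) := by exact_mod_cast congrArg Complex.ofReal hbt
    rw [smul_add, smul_add, smul_smul, smul_smul, h2, h3, smul_add (T : ℂ) δ₁ δ₂]
    rw [show (a:ℂ) • ρ₀ + (T:ℂ) • δ₁ + ((b:ℂ) • ρ₀ + (T:ℂ) • δ₂)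
        = ((a:ℂ) • ρ₀ + (b:ℂ) • ρ₀) + ((T:ℂ) • δ₁ + (T:ℂ) • δ₂) from by abel]
    rw [← add_smul, h1, one_smul]
  have hd₁ : IsDensityMatrix (ρ₀ + (t₁ : ℂ) • δ₁) := density_step hρ₀d htr₁ hP₁
  have hd₂ : IsDensityMatrix (ρ₀ + (t₂ : ℂ) • δ₂) := density_step hρ₀d htr₂ hP₂
  have hPSD : (ρ₀ + (T : ℂ) • (δ₁ + δ₂)).PosSemidef := by
    rw [← hmixid]
    exact (posSemidef_real_smul hapos hd₁.1).add (posSemidef_real_smul hbpos hd₂.1)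
  refine ⟨T, hTpos, hPSD, ?_⟩
  have hconc := cHolevoCap_concave N hd₁ hd₂ hapos hbpos hab
  rw [hmixid] at hconc
  set f₀ := cHolevoCap N ρ₀
  set f₁ := cHolevoCap N (ρ₀ + (t₁ : ℂ) • δ₁)
  set f₂ := cHolevoCap N (ρ₀ + (t₂ : ℂ) • δ₂)
  set fT := cHolevoCap N (ρ₀ + (T : ℂ) • (δ₁ + δ₂))
  have heq : (f₁ - f₀) / t₁ + (f₂ - f₀) / t₂ = (a * f₁ + b * f₂ - f₀) / T := by
    rw [hT, ha, hb]
    field_simp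
    ring
  rw [heq]
  have hnum : a * f₁ + b * f₂ - f₀ ≤ fT - f₀ := by linarith
  exact (div_le_div_iff_of_pos_right hTpos).2 hnum

lemma QS_nonempty (hd : 0 < dI) (hρ₀ : ρ₀.PosDef) {δ : Matrix (Fin dI) (Fin dI) ℂ}
    (hδ : δ.IsHermitian) : (QS N ρ₀ δ).Nonempty := by
  obtain ⟨t, ht, hP⟩ := exists_pos_step hd hρ₀ hδ
  exact ⟨_, t, ht, hP, rfl⟩

lemma QS_bddAbove (hd : 0 < dI) (hρ₀ : ρ₀.PosDef) (hρ₀d : IsDensityMatrix ρ₀)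
    {δ : Matrix (Fin dI) (Fin dI) ℂ} (hδ : δ.IsHermitian) (htrδ : δ.trace = 0) :
    BddAbove (QS N ρ₀ δ) := by
  obtain ⟨s, hs, hPs⟩ := exists_pos_step hd hρ₀ hδ.neg
  refine ⟨-((cHolevoCap N (ρ₀ + (s : ℂ) • (-δ)) - cHolevoCap N ρ₀) / s), ?_⟩
  rintro y ⟨t, ht, hPt, rfl⟩
  have htrneg : (-δ).trace = 0 := by rw [Matrix.trace_neg, htrδ, neg_zero]
  obtain ⟨T, hT, hPT, hle⟩ := core_quot N hρ₀d htrδ htrneg ht hs hPt hPs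
  have hzero : ρ₀ + (T : ℂ) • (δ + -δ) = ρ₀ := by
    rw [add_neg_cancel, smul_zero, add_zero]
  rw [hzero] at hle
  simp only [sub_self, zero_div] at hle
  linarith

lemma q_superadd (hd : 0 < dI) (hρ₀ : ρ₀.PosDef) (hρ₀d : IsDensityMatrix ρ₀)
    {δ₁ δ₂ : Matrix (Fin dI) (Fin dI) ℂ} (hδ₁ : δ₁.IsHermitian) (hδ₂ : δ₂.IsHermitian)
    (htr₁ : δ₁.trace = 0) (htr₂ : δ₂.trace = 0) :
    qfn N ρ₀ δ₁ + qfn N ρ₀ δ₂ ≤ qfn N ρ₀ (δ₁ + δ₂) := by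
  have hsumH : (δ₁ + δ₂).IsHermitian := hδ₁.add hδ₂
  have hsumtr : (δ₁ + δ₂).trace = 0 := by rw [Matrix.trace_add, htr₁, htr₂, add_zero]
  have key : ∀ y₁ ∈ QS N ρ₀ δ₁, ∀ y₂ ∈ QS N ρ₀ δ₂, y₁ + y₂ ≤ qfn N ρ₀ (δ₁ + δ₂) := by
    rintro y₁ ⟨t₁, ht₁, hP₁, rfl⟩ y₂ ⟨t₂, ht₂, hP₂, rfl⟩
    obtain ⟨T, hT, hPT, hle⟩ := core_quot N hρ₀d htr₁ htr₂ ht₁ ht₂ hP₁ hP₂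
    refine hle.trans (le_csSup (QS_bddAbove N hd hρ₀ hρ₀d hsumH hsumtr) ⟨T, hT, hPT, rfl⟩)
  have step : ∀ y₁ ∈ QS N ρ₀ δ₁, y₁ + qfn N ρ₀ δ₂ ≤ qfn N ρ₀ (δ₁ + δ₂) := by
    intro y₁ hy₁
    have h2 : qfn N ρ₀ δ₂ ≤ qfn N ρ₀ (δ₁ + δ₂) - y₁ :=
      csSup_le (QS_nonempty N hd hρ₀ hδ₂) (fun y₂ hy₂ => by
        have := key y₁ hy₁ y₂ hy₂; linarith)
    linarith
  have h1 : qfn N ρ₀ δ₁ ≤ qfn N ρ₀ (δ₁ + δ₂) - qfn N ρ₀ δ₂ :=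
    csSup_le (QS_nonempty N hd hρ₀ hδ₁) (fun y₁ hy₁ => by
      have := step y₁ hy₁; linarith)
  linarith

lemma real_smul_matrix (r : ℝ) (M : Matrix (Fin dI) (Fin dI) ℂ) :
    r • M = (r : ℂ) • M := by
  ext i j
  simp [Complex.real_smul]

lemma q_homog {c : ℝ} (hc : 0 < c) (δ : Matrix (Fin dI) (Fin dI) ℂ) :
    qfn N ρ₀ (c • δ) = c * qfn N ρ₀ δ := by
  have hset : QS N ρ₀ (c • δ) = c • QS N ρ₀ δ := by
    ext y
    constructor
    · rintro ⟨t, ht, hP, rfl⟩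
      rw [real_smul_matrix, smul_smul] at hP
      have hP' : (ρ₀ + ((t * c : ℝ) : ℂ) • δ).PosSemidef := by push_cast; exact hP
      refine Set.mem_smul_set.2 ⟨(cHolevoCap N (ρ₀ + ((t * c : ℝ) : ℂ) • δ)
        - cHolevoCap N ρ₀) / (t * c), ⟨t * c, by positivity, hP', rfl⟩, ?_⟩
      simp only [smul_eq_mul]
      rw [show ρ₀ + (t : ℂ) • c • δ = ρ₀ + ((t * c : ℝ) : ℂ) • δ from by
        rw [real_smul_matrix, smul_smul]; push_cast; ring_nf]
      field_simp
    · rintro ⟨x, ⟨t, ht, hP, rfl⟩, rfl⟩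
      refine ⟨t / c, by positivity, ?_, ?_⟩
      · rw [real_smul_matrix, smul_smul]
        have : ((t / c : ℝ) : ℂ) * (c : ℂ) = (t : ℂ) := by
          push_cast
          field_simp
        rw [this]
        exact hP
      · simp only [smul_eq_mul]
        rw [show ρ₀ + ((t / c : ℝ) : ℂ) • c • δ = ρ₀ + (t : ℂ) • δ from by
          rw [real_smul_matrix, smul_smul]
          congr 2
          push_cast
          field_simp]
        field_simp
  rw [qfn, hset, Real.sSup_smul_of_nonneg hc.le, smul_eq_mul, qfn]

lemma q_zero (hρ₀d : IsDensityMatrix ρ₀) : qfn N ρ₀ 0 = 0 := by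
  have hset : QS N ρ₀ 0 = {0} := by
    ext y
    constructor
    · rintro ⟨t, ht, hP, rfl⟩
      simp
    · rintro rfl
      exact ⟨1, one_pos, by simpa using hρ₀d.1, by simp⟩
  rw [qfn, hset, csSup_singleton]

lemma q_ge (hd : 0 < dI) (hρ₀ : ρ₀.PosDef) (hρ₀d : IsDensityMatrix ρ₀)
    {ρ : Matrix (Fin dI) (Fin dI) ℂ} (hρ : IsDensityMatrix ρ) :
    cHolevoCap N ρ - cHolevoCap N ρ₀ ≤ qfn N ρ₀ (ρ - ρ₀) := by
  have hδH : (ρ - ρ₀).IsHermitian := hρ.1.isHermitian.sub hρ₀.posSemidef.isHermitian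
  have hδtr : (ρ - ρ₀).trace = 0 := by
    rw [Matrix.trace_sub, hρ.2, hρ₀d.2, sub_self]
  have hid : ρ₀ + (1 : ℂ) • (ρ - ρ₀) = ρ := by
    rw [one_smul]
    abel
  have hmem : cHolevoCap N ρ - cHolevoCap N ρ₀ ∈ QS N ρ₀ (ρ - ρ₀) := by
    refine ⟨1, one_pos, ?_, ?_⟩
    · rw [Complex.ofReal_one, hid]
      exact hρ.1
    · rw [Complex.ofReal_one, hid, div_one]
  exact le_csSup (QS_bddAbove N hd hρ₀ hρ₀d hδH hδtr) hmem

end Grad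

section Final

variable {dI : ℕ}

lemma matrix_decomp (X : Matrix (Fin dI) (Fin dI) ℂ) :
    X = ∑ p : Fin dI × Fin dI, ((X p.1 p.2).re • Matrix.single p.1 p.2 (1 : ℂ)
      + (X p.1 p.2).im • (Complex.I • Matrix.single p.1 p.2 (1 : ℂ))) := by
  ext a b
  rw [Matrix.sum_apply]
  rw [Finset.sum_eq_single (a, b)]
  · simp only [Matrix.add_apply, Matrix.smul_apply, Matrix.single, Matrix.of_apply,
      and_self, if_true, Complex.real_smul, mul_one]
    simp only [smul_eq_mul, mul_one]
    exact (Complex.re_add_im _).symm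
  · rintro ⟨x, y⟩ - hne
    have hxy : ¬(x = a ∧ y = b) := by
      rintro ⟨rfl, rfl⟩
      exact hne rfl
    simp [Matrix.single, hxy]
  · intro h
    exact absurd (Finset.mem_univ _) h

lemma g_expand (g : Matrix (Fin dI) (Fin dI) ℂ →ₗ[ℝ] ℝ) (X : Matrix (Fin dI) (Fin dI) ℂ) :
    g X = ∑ p : Fin dI × Fin dI,
      ((X p.1 p.2).re * g (Matrix.single p.1 p.2 (1 : ℂ))
        + (X p.1 p.2).im * g (Complex.I • Matrix.single p.1 p.2 (1 : ℂ))) := by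
  conv_lhs => rw [matrix_decomp X]
  rw [map_sum]
  refine Finset.sum_congr rfl fun p _ => ?_
  rw [map_add, g.map_smul, g.map_smul, smul_eq_mul, smul_eq_mul]

def tauRaw (g : Matrix (Fin dI) (Fin dI) ℂ →ₗ[ℝ] ℝ) : Matrix (Fin dI) (Fin dI) ℂ :=
  Matrix.of fun i j => ((g (Matrix.single j i (1 : ℂ)) : ℝ) : ℂ)
    - ((g (Complex.I • Matrix.single j i (1 : ℂ)) : ℝ) : ℂ) * Complex.I

lemma tauRaw_trace_re (g : Matrix (Fin dI) (Fin dI) ℂ →ₗ[ℝ] ℝ)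
    (X : Matrix (Fin dI) (Fin dI) ℂ) : ((tauRaw g * X).trace).re = g X := by
  rw [g_expand g X, Matrix.trace]
  rw [Complex.re_sum]
  simp only [Matrix.diag_apply, Matrix.mul_apply, Complex.re_sum, Complex.mul_re]
  rw [Fintype.sum_prod_type]
  rw [Finset.sum_comm]
  refine Finset.sum_congr rfl fun x _ => Finset.sum_congr rfl fun y _ => ?_
  simp only [tauRaw, Matrix.of_apply, Complex.sub_re, Complex.sub_im, Complex.ofReal_re,
    Complex.ofReal_im, Complex.mul_re, Complex.mul_im, Complex.I_re, Complex.I_im]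
  ring

lemma conj_trace_re {M δ : Matrix (Fin dI) (Fin dI) ℂ} (hδ : δ.IsHermitian) :
    ((Mᴴ * δ).trace).re = ((M * δ).trace).re := by
  have h1 : Mᴴ * δ = (δᴴ * M)ᴴ := by
    rw [Matrix.conjTranspose_mul, Matrix.conjTranspose_conjTranspose]
  rw [h1, Matrix.trace_conjTranspose, Matrix.trace_mul_comm, hδ]
  rw [Complex.star_def, Complex.conj_re]

end Final

end Aux

/-- Existence of a supporting linear functional for the concave function `χ_N` at an
interior (positive definite) point `ρ₀`. -/
theorem cHolevoCap_supporting_functional {dI dO : ℕ} (N : QChannel (Fin dI) (Fin dO))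
    (ρ₀ : Matrix (Fin dI) (Fin dI) ℂ) (hρ₀ : ρ₀.PosDef) (hρ₀tr : ρ₀.trace = 1) :
    ∃ τ : Matrix (Fin dI) (Fin dI) ℂ, τ.IsHermitian ∧
      ∀ ρ : Matrix (Fin dI) (Fin dI) ℂ, IsDensityMatrix ρ →
        cHolevoCap N ρ ≤ cHolevoCap N ρ₀ + ((τ * (ρ - ρ₀)).trace).re := by
  classical
  have hd : 0 < dI := by
    rcases Nat.eq_zero_or_pos dI with h0 | h0
    · exfalso
      subst h0
      rw [Matrix.trace] at hρ₀tr
      simp at hρ₀tr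
    · exact h0
  have hρ₀d : IsDensityMatrix ρ₀ := ⟨hρ₀.posSemidef, hρ₀tr⟩
  set hmap : Matrix (Fin dI) (Fin dI) ℂ → Matrix (Fin dI) (Fin dI) ℂ :=
    fun X => ((1:ℝ)/2) • (X + Xᴴ)
      - ((X.trace.re / dI : ℝ)) • (1 : Matrix (Fin dI) (Fin dI) ℂ) with hmapdef
  have hdc : ((dI : ℕ) : ℂ) ≠ 0 := Nat.cast_ne_zero.2 hd.ne'
  have hmap_herm : ∀ X, (hmap X).IsHermitian := by
    intro X
    unfold Matrix.IsHermitian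
    rw [hmapdef]
    simp only [Matrix.conjTranspose_sub, Matrix.conjTranspose_smul, Matrix.conjTranspose_add,
      Matrix.conjTranspose_conjTranspose, Matrix.conjTranspose_one, star_trivial]
    rw [add_comm Xᴴ X]
  have hmap_tr : ∀ X, (hmap X).trace = 0 := by
    intro X
    rw [hmapdef]
    simp only [Matrix.trace_sub, Matrix.trace_smul, Matrix.trace_add,
      Matrix.trace_conjTranspose, Matrix.trace_one]
    rw [Complex.star_def]
    simp only [Complex.real_smul]
    rw [Complex.add_conj]
    push_cast
    field_simp
    simp
  have hmap_add : ∀ X Y, hmap (X + Y) = hmap X + hmap Y := by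
    intro X Y
    rw [hmapdef]
    simp only [Matrix.conjTranspose_add, Matrix.trace_add, Complex.add_re, add_div, add_smul,
      smul_add]
    abel
  have hmap_smul : ∀ (c : ℝ) (X), hmap (c • X) = c • hmap X := by
    intro c X
    rw [hmapdef]
    simp only [Matrix.conjTranspose_smul, star_trivial, Matrix.trace_smul, smul_add, smul_sub,
      smul_smul]
    have hre : ((c • X.trace).re) = c * X.trace.re := by
      rw [Complex.real_smul, Complex.mul_re]
      simp
    rw [hre, mul_div_assoc]
    rw [show (1:ℝ)/2 * c = c * (1/2) from by ring]
  have hnegmap : ∀ X, hmap (-X) = - hmap X := by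
    intro X
    have h1 := hmap_smul (-1) X
    simpa [neg_one_smul] using h1
  set p : Matrix (Fin dI) (Fin dI) ℂ → ℝ := fun X => - Aux.qfn N ρ₀ (hmap (-X)) with hpdef
  have phom : ∀ c : ℝ, 0 < c → ∀ X, p (c • X) = c * p X := by
    intro c hc X
    rw [hpdef]
    simp only
    rw [show -(c • X) = c • (-X) from by rw [smul_neg], hmap_smul,
      Aux.q_homog N hc]
    ring
  have padd : ∀ X Y, p (X + Y) ≤ p X + p Y := by
    intro X Y
    simp only [hpdef]
    rw [show -(X + Y) = -X + -Y from by abel, hmap_add]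
    have := Aux.q_superadd N hd hρ₀ hρ₀d (hmap_herm (-X)) (hmap_herm (-Y))
      (hmap_tr (-X)) (hmap_tr (-Y))
    linarith
  have hbot : ∀ x : ((0 : Matrix (Fin dI) (Fin dI) ℂ →ₗ[ℝ] ℝ).toPMap ⊥).domain,
      ((0 : Matrix (Fin dI) (Fin dI) ℂ →ₗ[ℝ] ℝ).toPMap ⊥) x ≤ p x := by
    intro x
    have hx0 : (x : Matrix (Fin dI) (Fin dI) ℂ) = 0 := (Submodule.mem_bot ℝ).1 x.2
    show (0 : Matrix (Fin dI) (Fin dI) ℂ →ₗ[ℝ] ℝ) x ≤ p x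
    rw [LinearMap.zero_apply, hx0]
    have h0 : hmap (-(0 : Matrix (Fin dI) (Fin dI) ℂ)) = 0 := by
      rw [neg_zero]
      have := hmap_smul 0 0
      simpa using this
    simp only [hpdef, h0]
    rw [Aux.q_zero N hρ₀d]
    simp
  obtain ⟨g, -, hg⟩ := exists_extension_of_le_sublinear
    ((0 : Matrix (Fin dI) (Fin dI) ℂ →ₗ[ℝ] ℝ).toPMap ⊥) p phom padd hbot
  have hgq : ∀ ρ : Matrix (Fin dI) (Fin dI) ℂ, IsDensityMatrix ρ →
      cHolevoCap N ρ - cHolevoCap N ρ₀ ≤ g (ρ - ρ₀) := by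
    intro ρ hρ
    have hδH : (ρ - ρ₀).IsHermitian := hρ.1.isHermitian.sub hρ₀.posSemidef.isHermitian
    have hδtr : (ρ - ρ₀).trace = 0 := by rw [Matrix.trace_sub, hρ.2, hρ₀tr, sub_self]
    have hfix : hmap (ρ - ρ₀) = ρ - ρ₀ := by
      rw [hmapdef]
      simp only
      rw [hδH, hδtr]
      simp only [Complex.zero_re, zero_div, zero_smul, sub_zero]
      rw [show (ρ - ρ₀) + (ρ - ρ₀) = (2:ℝ) • (ρ - ρ₀) from (two_smul ℝ _).symm, smul_smul]
      norm_num
    have h1 : g (-(ρ - ρ₀)) ≤ p (-(ρ - ρ₀)) := hg _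
    rw [hpdef] at h1
    simp only [neg_neg] at h1
    rw [hfix] at h1
    rw [map_neg] at h1
    have h3 := Aux.q_ge N hd hρ₀ hρ₀d hρ
    linarith
  refine ⟨((1:ℝ)/2) • (Aux.tauRaw g + (Aux.tauRaw g)ᴴ), ?_, ?_⟩
  · unfold Matrix.IsHermitian
    rw [Matrix.conjTranspose_smul, star_trivial, Matrix.conjTranspose_add,
      Matrix.conjTranspose_conjTranspose, add_comm ((Aux.tauRaw g)ᴴ)]
  · intro ρ hρ
    have hδH : (ρ - ρ₀).IsHermitian := hρ.1.isHermitian.sub hρ₀.posSemidef.isHermitian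
    have htr : (((((1:ℝ)/2) • (Aux.tauRaw g + (Aux.tauRaw g)ᴴ)) * (ρ - ρ₀)).trace).re
        = g (ρ - ρ₀) := by
      rw [Matrix.smul_mul, Matrix.add_mul, Matrix.trace_smul, Matrix.trace_add]
      rw [Complex.real_smul, Complex.mul_re]
      simp only [Complex.ofReal_re, Complex.ofReal_im, zero_mul, sub_zero]
      rw [Complex.add_re, Aux.tauRaw_trace_re g (ρ - ρ₀), Aux.conj_trace_re hδH,
        Aux.tauRaw_trace_re g (ρ - ρ₀)]
      ring
    rw [htr]
    have := hgq ρ hρ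
    linarith


end
end
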